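/- arXiv:2006.06393 — 6 statements merged into one kernel-verified Lean document; each statement's English description precedes it below -/
import Mathlib

section
/- Let g and k be two different jobs such that x_{g1} > 0 and x_{k2} > 0. If ε_r(g,k) > 0, then no (g,k)-feasible semi-matching E in G exists. -/
open Finset

noncomputable section

/-- Feasibility for system `S`. -/
def FeasibleS {J M : Type*} [Fintype J] [Fintype M]
    (G1 G2 : Finset M) (b : J → M → ℕ) (a1 a2 : J → ℕ)
    (y : J → M → ℝ) (x1 x2 : J → ℝ) (r w : ℝ) : Prop :=
  (∀ h ∈ G1, ((∑ j, (b j h : ℝ)) - ((∑ j, (a2 j : ℝ)) - r) ≤ (∑ j, y j h)) ∧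
    ((∑ j, y j h) ≤ w)) ∧
  (∀ h ∈ G2, ((∑ j, (b j h : ℝ)) - ((∑ j, (a1 j : ℝ)) - r) ≤ (∑ j, y j h)) ∧
    ((∑ j, y j h) ≤ w)) ∧
  (∀ j, (∑ h, y j h) ≤ w) ∧
  (∀ j, ∀ h, 0 ≤ y j h ∧ y j h ≤ (b j h : ℝ)) ∧
  ((∑ j, x1 j) = r) ∧ ((∑ j, x2 j) = r) ∧
  (∀ j, x1 j + x2 j ≤ r) ∧
  (∀ j, 0 ≤ x1 j ∧ x1 j ≤ (a1 j : ℝ)) ∧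
  (∀ j, 0 ≤ x2 j ∧ x2 j ≤ (a2 j : ℝ)) ∧
  (∀ j, (∑ h ∈ G1, ((b j h : ℝ) - y j h)) + (a2 j : ℝ) - x2 j ≤ (∑ j', (a2 j' : ℝ)) - r) ∧
  (∀ j, (∑ h ∈ G2, ((b j h : ℝ) - y j h)) + (a1 j : ℝ) - x1 j ≤ (∑ j', (a1 j' : ℝ)) - r)

/-- Feasibility for the linear program `ℓp` associated with an optimal
LP-relaxation value `(rstar, wstar)`. -/
def FeasibleLP {J M : Type*} [Fintype J] [Fintype M]
    (G1 G2 : Finset M) (b : J → M → ℕ) (a1 a2 : J → ℕ)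
    (rstar wstar : ℝ)
    (y : J → M → ℝ) (x1 x2 : J → ℝ) (r w : ℝ) : Prop :=
  FeasibleS G1 G2 b a1 a2 y x1 x2 r w ∧
  w - r = (⌈wstar - rstar⌉ : ℝ) ∧ ((⌊rstar⌋ : ℝ) ≤ r)

/-- The quantity `ε_r(g,k)`. -/
def epsR {J : Type*} [DecidableEq J] (B1 B2 : Finset J) (x1 x2 : J → ℝ)
    (r ε : ℝ) (g k : J) : ℝ :=
  if hne : ((B1 ∪ B2) \ {g, k}).Nonempty then
    min (((B1 ∪ B2) \ {g, k}).inf' hne (fun j => r - (x1 j + x2 j))) ε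
  else ε

/-- The slack `ε_a(g)`. -/
def epsA {J M : Type*} [Fintype J] (G2 : Finset M) (b : J → M → ℕ) (a1 : J → ℕ)
    (y : J → M → ℝ) (x1 : J → ℝ) (r : ℝ) (g : J) : ℝ :=
  (∑ h ∈ G2, y g h) -
    ((∑ h ∈ G2, (b g h : ℝ)) + (a1 g : ℝ) - x1 g - (∑ j, (a1 j : ℝ)) + r)

/-- The slack `ε_c(k)`. -/
def epsC {J M : Type*} [Fintype J] (G1 : Finset M) (b : J → M → ℕ) (a2 : J → ℕ)
    (y : J → M → ℝ) (x2 : J → ℝ) (r : ℝ) (k : J) : ℝ :=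
  (∑ h ∈ G1, y k h) -
    ((∑ h ∈ G1, (b k h : ℝ)) + (a2 k : ℝ) - x2 k - (∑ j, (a2 j : ℝ)) + r)

theorem no_feasible_semi_matching
    {J M : Type*} [Fintype J] [Fintype M] [DecidableEq J] [DecidableEq M]
    (G1 G2 : Finset M) (hG1ne : G1.Nonempty) (hG2ne : G2.Nonempty)
    (hdisj : Disjoint G1 G2) (hcover : G1 ∪ G2 = Finset.univ)
    (b : J → M → ℕ) (a1 a2 : J → ℕ)
    (ystar : J → M → ℝ) (x1star x2star : J → ℝ) (rstar wstar : ℝ)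
    (hstar : FeasibleS G1 G2 b a1 a2 ystar x1star x2star rstar wstar)
    (hstaropt : ∀ y' x1' x2' r' w', FeasibleS G1 G2 b a1 a2 y' x1' x2' r' w' →
      wstar - rstar ≤ w' - r')
    (y : J → M → ℝ) (x1 x2 : J → ℝ) (r w : ℝ)
    (hfeas : FeasibleLP G1 G2 b a1 a2 rstar wstar y x1 x2 r w)
    (hopt : ∀ y' x1' x2' r' w',
      FeasibleLP G1 G2 b a1 a2 rstar wstar y' x1' x2' r' w' → r ≤ r')
    (ε : ℝ) (hε0 : 0 < ε) (hε1 : ε < 1) (hrε : r = (⌊rstar⌋ : ℝ) + ε)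
    (B1 B2 : Finset J)
    (hB1 : ∀ j, j ∈ B1 ↔ ¬∃ z : ℤ, x1 j = (z : ℝ))
    (hB2 : ∀ j, j ∈ B2 ↔ ¬∃ z : ℤ, x2 j = (z : ℝ))
    (g k : J) (hgk : g ≠ k) (hxg : 0 < x1 g) (hxk : 0 < x2 k)
    (hepsr : 0 < epsR B1 B2 x1 x2 r ε g k) :
    ¬ ∃ E : Finset (J × M),
      E.card = Fintype.card M ∧
      (∀ e ∈ E, 0 < y e.1 e.2) ∧
      (∀ e ∈ E, ∀ e' ∈ E, e.2 ∈ G1 → e'.2 ∈ G1 → e ≠ e' → e.1 ≠ e'.1 ∧ e.2 ≠ e'.2) ∧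
      (∀ e ∈ E, ∀ e' ∈ E, e.2 ∈ G2 → e'.2 ∈ G2 → e ≠ e' → e.1 ≠ e'.1 ∧ e.2 ≠ e'.2) ∧
      (∀ j, ((∑ h, y j h) = w) → ∃ h, (j, h) ∈ E) ∧
      (epsA G2 b a1 y x1 r g = 0 → ∀ h ∈ G2, (g, h) ∉ E) ∧
      (epsC G1 b a2 y x2 r k = 0 → ∀ h ∈ G1, (k, h) ∉ E) := by
  rintro ⟨E, hcard, hpos, hm1, hm2, hD, hAg, hCk⟩
  unfold FeasibleLP FeasibleS at hfeas
  obtain ⟨⟨hcol1, hcol2, hrow, hybd, hx1sum, hx2sum, hx12, hx1bd, hx2bd, hj1, hj2⟩,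
    hwr, hfl⟩ := hfeas
  classical
  have hJne : (Finset.univ : Finset J).Nonempty := ⟨g, Finset.mem_univ g⟩
  obtain ⟨m0, hm0⟩ := hG1ne
  have hMne : Nonempty M := ⟨m0⟩
  have hEne : E.Nonempty := by
    rw [← Finset.card_pos, hcard]; exact Fintype.card_pos
  -- the second projection is injective on E
  have hsnd : ∀ e ∈ E, ∀ e' ∈ E, e ≠ e' → e.2 ≠ e'.2 := by
    intro e he e' he' hne
    have h2 : e.2 ∈ G1 ∨ e.2 ∈ G2 := by
      have := Finset.mem_univ e.2; rw [← hcover] at this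
      exact Finset.mem_union.mp this
    have h2' : e'.2 ∈ G1 ∨ e'.2 ∈ G2 := by
      have := Finset.mem_univ e'.2; rw [← hcover] at this
      exact Finset.mem_union.mp this
    rcases h2 with h2 | h2 <;> rcases h2' with h2' | h2'
    · exact (hm1 e he e' he' h2 h2' hne).2
    · intro hq; exact (Finset.disjoint_left.mp hdisj (hq ▸ h2)) h2'
    · intro hq; exact (Finset.disjoint_left.mp hdisj (hq ▸ h2')) h2
    · exact (hm2 e he e' he' h2 h2' hne).2
  have himg : E.image Prod.snd = Finset.univ := by
    apply Finset.eq_univ_of_card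
    have hinj : Set.InjOn Prod.snd (E : Set (J × M)) := by
      intro e he e' he' heq
      by_contra hne
      exact hsnd e he e' he' hne heq
    rw [Finset.card_image_of_injOn hinj, hcard]
  have hcov : ∀ h : M, ∃ j : J, (j, h) ∈ E := by
    intro h
    have hh : h ∈ E.image Prod.snd := by rw [himg]; exact Finset.mem_univ h
    obtain ⟨e, he, heq⟩ := Finset.mem_image.mp hh
    refine ⟨e.1, ?_⟩
    rw [← heq, Prod.mk.eta]; exact he
  have hcard1 : ∀ h : M, (Finset.univ.filter fun j => (j, h) ∈ E).card = 1 := by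
    intro h
    obtain ⟨j0, hj0⟩ := hcov h
    have hle : (Finset.univ.filter fun j => (j, h) ∈ E).card ≤ 1 := by
      apply Finset.card_le_one.mpr
      intro a ha b hb
      simp only [Finset.mem_filter] at ha hb
      by_contra hab
      exact hsnd (a, h) ha.2 (b, h) hb.2 (by simpa using hab) rfl
    have hge : 0 < (Finset.univ.filter fun j => (j, h) ∈ E).card :=
      Finset.card_pos.mpr ⟨j0, by simp [hj0]⟩
    omega
  have hG1card : ∀ j : J, (G1.filter fun h => (j, h) ∈ E).card ≤ 1 := by
    intro j
    apply Finset.card_le_one.mpr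
    intro a ha b hb
    simp only [Finset.mem_filter] at ha hb
    by_contra hab
    exact (hm1 (j, a) ha.2 (j, b) hb.2 ha.1 hb.1 (by simpa using hab)).1 rfl
  have hG2card : ∀ j : J, (G2.filter fun h => (j, h) ∈ E).card ≤ 1 := by
    intro j
    apply Finset.card_le_one.mpr
    intro a ha b hb
    simp only [Finset.mem_filter] at ha hb
    by_contra hab
    exact (hm2 (j, a) ha.2 (j, b) hb.2 ha.1 hb.1 (by simpa using hab)).1 rfl
  -- slacks are nonnegative
  have hepsCnn : 0 ≤ epsC G1 b a2 y x2 r k := by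
    have h1 := hj1 k
    rw [Finset.sum_sub_distrib] at h1
    unfold epsC; linarith
  have hepsAnn : 0 ≤ epsA G2 b a1 y x1 r g := by
    have h1 := hj2 g
    rw [Finset.sum_sub_distrib] at h1
    unfold epsA; linarith
  -- define the perturbation size δ
  set εR := epsR B1 B2 x1 x2 r ε g k with hεR
  set cK : ℝ := if epsC G1 b a2 y x2 r k = 0 then ε else epsC G1 b a2 y x2 r k with hcK
  set cA : ℝ := if epsA G2 b a1 y x1 r g = 0 then ε else epsA G2 b a1 y x1 r g with hcA
  set tJ : J → ℝ := fun j => if (∑ h, y j h) < w then w - (∑ h, y j h) else ε with htJ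
  set δ := min εR (min (x1 g) (min (x2 k) (min (E.inf' hEne fun e => y e.1 e.2)
      (min (Finset.univ.inf' hJne tJ) (min cK cA))))) with hδ
  have hδpos : 0 < δ := by
    rw [hδ]
    refine lt_min hepsr (lt_min hxg (lt_min hxk (lt_min ?_ (lt_min ?_ (lt_min ?_ ?_)))))
    · exact (Finset.lt_inf'_iff hEne).mpr hpos
    · refine (Finset.lt_inf'_iff hJne).mpr ?_
      intro j _
      rw [htJ]
      dsimp only
      split
      · linarith
      · exact hε0
    · rw [hcK]; split
      · exact hε0
      · exact lt_of_le_of_ne hepsCnn (Ne.symm (by assumption))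
    · rw [hcA]; split
      · exact hε0
      · exact lt_of_le_of_ne hepsAnn (Ne.symm (by assumption))
  -- extract bounds on δ
  have hδεR : δ ≤ εR := by rw [hδ]; exact min_le_left _ _
  have hδx1g : δ ≤ x1 g := by
    rw [hδ]; exact le_trans (min_le_right _ _) (min_le_left _ _)
  have hδx2k : δ ≤ x2 k := by
    rw [hδ]
    exact le_trans (min_le_right _ _) (le_trans (min_le_right _ _) (min_le_left _ _))
  have hδy : ∀ e ∈ E, δ ≤ y e.1 e.2 := by
    intro e he
    refine le_trans ?_ (Finset.inf'_le (fun e => y e.1 e.2) he)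
    rw [hδ]
    exact le_trans (min_le_right _ _) (le_trans (min_le_right _ _)
      (le_trans (min_le_right _ _) (min_le_left _ _)))
  have hδtJ : ∀ j : J, δ ≤ tJ j := by
    intro j
    refine le_trans ?_ (Finset.inf'_le tJ (Finset.mem_univ j))
    rw [hδ]
    exact le_trans (min_le_right _ _) (le_trans (min_le_right _ _)
      (le_trans (min_le_right _ _) (le_trans (min_le_right _ _) (min_le_left _ _))))
  have hδcK : δ ≤ cK := by
    rw [hδ]
    exact le_trans (min_le_right _ _) (le_trans (min_le_right _ _)
      (le_trans (min_le_right _ _) (le_trans (min_le_right _ _)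
      (le_trans (min_le_right _ _) (min_le_left _ _)))))
  have hδcA : δ ≤ cA := by
    rw [hδ]
    exact le_trans (min_le_right _ _) (le_trans (min_le_right _ _)
      (le_trans (min_le_right _ _) (le_trans (min_le_right _ _)
      (le_trans (min_le_right _ _) (min_le_right _ _)))))
  have hεRε : εR ≤ ε := by
    rw [hεR]; unfold epsR; split
    · exact min_le_right _ _
    · exact le_rfl
  have hδε : δ ≤ ε := le_trans hδεR hεRε
  have hεRj : ∀ j ∈ (B1 ∪ B2) \ {g, k}, εR ≤ r - (x1 j + x2 j) := by
    intro j hj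
    rw [hεR]; unfold epsR
    rw [dif_pos ⟨j, hj⟩]
    exact le_trans (min_le_left _ _) (Finset.inf'_le (fun j => r - (x1 j + x2 j)) hj)
  -- sum computations
  have hcolδ : ∀ h : M, (∑ j, if (j, h) ∈ E then δ else 0) = δ := by
    intro h
    rw [← Finset.sum_filter, Finset.sum_const, hcard1 h, one_smul]
  have hfilt : ∀ (s : Finset M) (j : J),
      (∑ h ∈ s, if (j, h) ∈ E then δ else 0)
        = ((s.filter fun h => (j, h) ∈ E).card : ℝ) * δ := by
    intro s j
    rw [← Finset.sum_filter, Finset.sum_const, nsmul_eq_mul]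
  have hG1le : ∀ j : J, (∑ h ∈ G1, if (j, h) ∈ E then δ else 0) ≤ δ := by
    intro j
    rw [hfilt]
    calc ((G1.filter fun h => (j, h) ∈ E).card : ℝ) * δ ≤ 1 * δ := by
          apply mul_le_mul_of_nonneg_right _ hδpos.le
          exact_mod_cast hG1card j
      _ = δ := one_mul δ
  have hG2le : ∀ j : J, (∑ h ∈ G2, if (j, h) ∈ E then δ else 0) ≤ δ := by
    intro j
    rw [hfilt]
    calc ((G2.filter fun h => (j, h) ∈ E).card : ℝ) * δ ≤ 1 * δ := by
          apply mul_le_mul_of_nonneg_right _ hδpos.le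
          exact_mod_cast hG2card j
      _ = δ := one_mul δ
  have hitenn : ∀ (s : Finset M) (j : J), 0 ≤ ∑ h ∈ s, if (j, h) ∈ E then δ else 0 := by
    intro s j
    apply Finset.sum_nonneg
    intro h _
    split
    · exact hδpos.le
    · exact le_rfl
  have hrowδ : ∀ (j : J) (h0 : M), (j, h0) ∈ E →
      δ ≤ ∑ h, if (j, h) ∈ E then δ else 0 := by
    intro j h0 hh0
    have h1 := Finset.single_le_sum (f := fun h => if (j, h) ∈ E then δ else 0)
      (fun i _ => by by_cases hh : (j, i) ∈ E <;> simp [hh, hδpos.le]) (Finset.mem_univ h0)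
    simpa [if_pos hh0] using h1
  -- the perturbed solution
  have hfeas' : FeasibleLP G1 G2 b a1 a2 rstar wstar
      (fun j h => y j h - if (j, h) ∈ E then δ else 0)
      (fun j => x1 j - if j = g then δ else 0)
      (fun j => x2 j - if j = k then δ else 0)
      (r - δ) (w - δ) := by
    unfold FeasibleLP FeasibleS
    dsimp only
    refine ⟨⟨?_, ?_, ?_, ?_, ?_, ?_, ?_, ?_, ?_, ?_, ?_⟩, ?_, ?_⟩
    · intro h hh
      rw [Finset.sum_sub_distrib, hcolδ h]
      obtain ⟨hlo, hhi⟩ := hcol1 h hh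
      constructor <;> linarith
    · intro h hh
      rw [Finset.sum_sub_distrib, hcolδ h]
      obtain ⟨hlo, hhi⟩ := hcol2 h hh
      constructor <;> linarith
    · intro j
      rw [Finset.sum_sub_distrib]
      by_cases htight : (∑ h, y j h) = w
      · obtain ⟨h0, hh0⟩ := hD j htight
        have := hrowδ j h0 hh0
        linarith
      · have h1 : (∑ h, y j h) < w := lt_of_le_of_ne (hrow j) htight
        have h2 := hδtJ j
        rw [htJ] at h2
        dsimp only at h2
        rw [if_pos h1] at h2
        have := hitenn Finset.univ j
        linarith
    · intro j h
      obtain ⟨h0, h1⟩ := hybd j h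
      by_cases he : (j, h) ∈ E
      · rw [if_pos he]
        have := hδy (j, h) he
        constructor <;> simp at this ⊢ <;> linarith
      · rw [if_neg he]
        constructor <;> linarith
    · rw [Finset.sum_sub_distrib, Finset.sum_ite_eq' Finset.univ g (fun _ => δ),
        if_pos (Finset.mem_univ g), hx1sum]
    · rw [Finset.sum_sub_distrib, Finset.sum_ite_eq' Finset.univ k (fun _ => δ),
        if_pos (Finset.mem_univ k), hx2sum]
    · intro j
      by_cases hjg : j = g
      · subst hjg
        rw [if_pos rfl, if_neg hgk]
        have := hx12 j
        linarith
      · rw [if_neg hjg]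
        by_cases hjk : j = k
        · subst hjk
          rw [if_pos rfl]
          have := hx12 j
          linarith
        · rw [if_neg hjk]
          by_cases hjB : j ∈ B1 ∪ B2
          · have hjm : j ∈ (B1 ∪ B2) \ {g, k} := by
              rw [Finset.mem_sdiff]
              refine ⟨hjB, ?_⟩
              simp [hjg, hjk]
            have := hεRj j hjm
            linarith
          · have hnB1 : j ∉ B1 := fun hc => hjB (Finset.mem_union_left _ hc)
            have hnB2 : j ∉ B2 := fun hc => hjB (Finset.mem_union_right _ hc)
            obtain ⟨z1, hz1⟩ := not_not.mp (fun hc => hnB1 ((hB1 j).mpr hc))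
            obtain ⟨z2, hz2⟩ := not_not.mp (fun hc => hnB2 ((hB2 j).mpr hc))
            have hzle : (z1 + z2 : ℤ) ≤ ⌊rstar⌋ := by
              have h1 : ((z1 + z2 : ℤ) : ℝ) < ((⌊rstar⌋ + 1 : ℤ) : ℝ) := by
                push_cast
                have := hx12 j
                linarith
              have h2 : (z1 + z2 : ℤ) < ⌊rstar⌋ + 1 := by exact_mod_cast h1
              omega
            have h3 : ((z1 + z2 : ℤ) : ℝ) ≤ ((⌊rstar⌋ : ℤ) : ℝ) := by exact_mod_cast hzle
            push_cast at h3
            linarith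
    · intro j
      obtain ⟨h0, h1⟩ := hx1bd j
      by_cases hjg : j = g
      · subst hjg; rw [if_pos rfl]
        constructor <;> linarith
      · rw [if_neg hjg]
        constructor <;> linarith
    · intro j
      obtain ⟨h0, h1⟩ := hx2bd j
      by_cases hjk : j = k
      · subst hjk; rw [if_pos rfl]
        constructor <;> linarith
      · rw [if_neg hjk]
        constructor <;> linarith
    · intro j
      have hsplit : (∑ h ∈ G1, ((b j h : ℝ) - (y j h - if (j, h) ∈ E then δ else 0)))
          = (∑ h ∈ G1, ((b j h : ℝ) - y j h)) + ∑ h ∈ G1, (if (j, h) ∈ E then δ else 0) := by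
        rw [← Finset.sum_add_distrib]
        apply Finset.sum_congr rfl
        intro h _
        ring
      rw [hsplit]
      by_cases hjk : j = k
      · subst hjk
        rw [if_pos rfl]
        by_cases hC0 : epsC G1 b a2 y x2 r j = 0
        · have hzero : (∑ h ∈ G1, if (j, h) ∈ E then δ else 0) = 0 := by
            apply Finset.sum_eq_zero
            intro h hh
            exact if_neg (hCk hC0 h hh)
          rw [hzero]
          have := hj1 j
          linarith
        · have h1 : δ ≤ epsC G1 b a2 y x2 r j := by
            rw [hcK, if_neg hC0] at hδcK
            exact hδcK
          have h2 : epsC G1 b a2 y x2 r j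
              = (∑ j', (a2 j' : ℝ)) - r
                - ((∑ h ∈ G1, ((b j h : ℝ) - y j h)) + (a2 j : ℝ) - x2 j) := by
            unfold epsC
            rw [Finset.sum_sub_distrib]
            ring
          have h3 := hG1le j
          linarith
      · rw [if_neg hjk]
        have := hj1 j
        have := hG1le j
        linarith
    · intro j
      have hsplit : (∑ h ∈ G2, ((b j h : ℝ) - (y j h - if (j, h) ∈ E then δ else 0)))
          = (∑ h ∈ G2, ((b j h : ℝ) - y j h)) + ∑ h ∈ G2, (if (j, h) ∈ E then δ else 0) := by
        rw [← Finset.sum_add_distrib]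
        apply Finset.sum_congr rfl
        intro h _
        ring
      rw [hsplit]
      by_cases hjg : j = g
      · subst hjg
        rw [if_pos rfl]
        by_cases hA0 : epsA G2 b a1 y x1 r j = 0
        · have hzero : (∑ h ∈ G2, if (j, h) ∈ E then δ else 0) = 0 := by
            apply Finset.sum_eq_zero
            intro h hh
            exact if_neg (hAg hA0 h hh)
          rw [hzero]
          have := hj2 j
          linarith
        · have h1 : δ ≤ epsA G2 b a1 y x1 r j := by
            rw [hcA, if_neg hA0] at hδcA
            exact hδcA
          have h2 : epsA G2 b a1 y x1 r j
              = (∑ j', (a1 j' : ℝ)) - r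
                - ((∑ h ∈ G2, ((b j h : ℝ) - y j h)) + (a1 j : ℝ) - x1 j) := by
            unfold epsA
            rw [Finset.sum_sub_distrib]
            ring
          have h3 := hG2le j
          linarith
      · rw [if_neg hjg]
        have := hj2 j
        have := hG2le j
        linarith
    · rw [show w - δ - (r - δ) = w - r by ring]
      exact hwr
    · linarith
  have := hopt _ _ _ _ _ hfeas'
  linarith
end
end

section
/- Let g and k be two different jobs such that x_{g1} > 0 and x_{k2} > 0. If ε_r(g,k) > 0, then no column of type (∗, k̄ ; ∗, ḡ) exists in d(y,w), i.e., d(y,w) contains no column whose matching matches k to no machine of G1 and matches g to no machine of G2. -/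
open Finset

noncomputable section

/-- A column matching: a matching of all machines to distinct jobs, using only
edges of the graph `G` (i.e. pairs with `y j h > 0`), and covering every
`d`-tight job (every job `j` with `∑ h, y j h = w`). -/
def IsColumn {J M : Type*} [Fintype M] (y : J → M → ℝ) (w : ℝ) (f : M → J) : Prop :=
  Function.Injective f ∧ (∀ h, 0 < y (f h) h) ∧
  (∀ j, ((∑ h, y j h) = w) → ∃ h, f h = j)

/-- `cols` together with multiplicities `mult` is a representation `d(y,w)` of the
part (d) of the solution as a set of columns. -/
def IsColRep {J M : Type*} [Fintype J] [Fintype M] [DecidableEq J]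
    (y : J → M → ℝ) (w : ℝ) (cols : Finset (M → J)) (mult : (M → J) → ℝ) : Prop :=
  (∀ f ∈ cols, IsColumn y w f ∧ 0 < mult f) ∧
  ((∑ f ∈ cols, mult f) = w) ∧
  (∀ j, ∀ h, y j h = ∑ f ∈ cols, if f h = j then mult f else 0)

theorem no_barred_column
    {J M : Type*} [Fintype J] [Fintype M] [DecidableEq J] [DecidableEq M]
    (G1 G2 : Finset M) (hG1ne : G1.Nonempty) (hG2ne : G2.Nonempty)
    (hdisj : Disjoint G1 G2) (hcover : G1 ∪ G2 = Finset.univ)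
    (b : J → M → ℕ) (a1 a2 : J → ℕ)
    (ystar : J → M → ℝ) (x1star x2star : J → ℝ) (rstar wstar : ℝ)
    (hstar : FeasibleS G1 G2 b a1 a2 ystar x1star x2star rstar wstar)
    (hstaropt : ∀ y' x1' x2' r' w', FeasibleS G1 G2 b a1 a2 y' x1' x2' r' w' →
      wstar - rstar ≤ w' - r')
    (y : J → M → ℝ) (x1 x2 : J → ℝ) (r w : ℝ)
    (hfeas : FeasibleLP G1 G2 b a1 a2 rstar wstar y x1 x2 r w)
    (hopt : ∀ y' x1' x2' r' w',
      FeasibleLP G1 G2 b a1 a2 rstar wstar y' x1' x2' r' w' → r ≤ r')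
    (ε : ℝ) (hε0 : 0 < ε) (hε1 : ε < 1) (hrε : r = (⌊rstar⌋ : ℝ) + ε)
    (B1 B2 : Finset J)
    (hB1 : ∀ j, j ∈ B1 ↔ ¬∃ z : ℤ, x1 j = (z : ℝ))
    (hB2 : ∀ j, j ∈ B2 ↔ ¬∃ z : ℤ, x2 j = (z : ℝ))
    (cols : Finset (M → J)) (mult : (M → J) → ℝ)
    (hrep : IsColRep y w cols mult)
    (g k : J) (hgk : g ≠ k) (hxg : 0 < x1 g) (hxk : 0 < x2 k)
    (hepsr : 0 < epsR B1 B2 x1 x2 r ε g k) :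
    ¬ ∃ f ∈ cols, (∀ h ∈ G1, f h ≠ k) ∧ (∀ h ∈ G2, f h ≠ g) := by
  classical
  rintro ⟨f, hf, hk1, hg2⟩
  obtain ⟨hS, hwrdiff, hrlo⟩ := hfeas
  obtain ⟨hC1, hC2, hCj, hCy, hX1, hX2, hXr, hXa1, hXa2, hD2, hD1⟩ := hS
  obtain ⟨hcols, hmsum, hyrep⟩ := hrep
  obtain ⟨⟨hfinj, hfpos, hftight⟩, hfmult⟩ := hcols f hf
  set εr := epsR B1 B2 x1 x2 r ε g k with hεrdef
  have hεr_le_ε : εr ≤ ε := by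
    rw [hεrdef, epsR]
    split
    · exact min_le_right _ _
    · exact le_rfl
  have hεr_le : ∀ j ∈ (B1 ∪ B2) \ {g, k}, εr ≤ r - (x1 j + x2 j) := by
    intro j hj
    rw [hεrdef, epsR]
    have hne : ((B1 ∪ B2) \ {g, k}).Nonempty := ⟨j, hj⟩
    rw [dif_pos hne]
    exact le_trans (min_le_left _ _) (Finset.inf'_le _ hj)
  -- nonempty J
  obtain ⟨h0, hh0⟩ := hG1ne
  -- slack for unmatched jobs
  set slack : J → ℝ := fun j => if ∃ h, f h = j then ε else w - ∑ h, y j h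
    with hslackdef
  have hJne : (Finset.univ : Finset J).Nonempty := ⟨f h0, Finset.mem_univ _⟩
  set sMin : ℝ := Finset.univ.inf' hJne slack with hsMindef
  have hslackpos : ∀ j, 0 < slack j := by
    intro j
    rw [hslackdef]
    by_cases hex : ∃ h, f h = j
    · simpa [hex] using hε0
    · simp only [hex, if_false]
      have h1 : (∑ h, y j h) ≤ w := hCj j
      have h2 : (∑ h, y j h) ≠ w := fun he => hex (hftight j he)
      have := lt_of_le_of_ne h1 h2
      linarith
  have hsMinpos : 0 < sMin := by
    rw [hsMindef, Finset.lt_inf'_iff]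
    intro j _
    exact hslackpos j
  set δ : ℝ := min (min εr (min (x1 g) (x2 k))) (min (mult f) sMin) with hδdef
  have hδpos : 0 < δ := by
    rw [hδdef]
    exact lt_min (lt_min hepsr (lt_min hxg hxk)) (lt_min hfmult hsMinpos)
  have hδ_le_εr : δ ≤ εr := le_trans (min_le_left _ _) (min_le_left _ _)
  have hδ_le_ε : δ ≤ ε := le_trans hδ_le_εr hεr_le_ε
  have hδ_le_x1g : δ ≤ x1 g :=
    le_trans (min_le_left _ _) (le_trans (min_le_right _ _) (min_le_left _ _))
  have hδ_le_x2k : δ ≤ x2 k :=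
    le_trans (min_le_left _ _) (le_trans (min_le_right _ _) (min_le_right _ _))
  have hδ_le_mult : δ ≤ mult f := le_trans (min_le_right _ _) (min_le_left _ _)
  have hδ_le_sMin : δ ≤ sMin := le_trans (min_le_right _ _) (min_le_right _ _)
  have hδ_le_slack : ∀ j, δ ≤ slack j := fun j =>
    le_trans hδ_le_sMin (Finset.inf'_le _ (Finset.mem_univ j))
  -- sum of the indicator over all jobs for a fixed machine
  have hind_mach : ∀ h : M, (∑ j, if f h = j then δ else 0) = δ := by
    intro h
    rw [Finset.sum_ite_eq]
    simp
  -- sum of the indicator over machines in a set, for a fixed job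
  have hind_job : ∀ (s : Finset M) (j : J),
      (∑ h ∈ s, if f h = j then δ else 0) =
        if ∃ h ∈ s, f h = j then δ else 0 := by
    intro s j
    by_cases hex : ∃ h ∈ s, f h = j
    · obtain ⟨h1, hh1s, hh1⟩ := hex
      rw [if_pos ⟨h1, hh1s, hh1⟩, Finset.sum_eq_single h1]
      · rw [if_pos hh1]
      · intro h hhs hne
        rw [if_neg]
        intro he
        exact hne (hfinj (he.trans hh1.symm))
      · intro habs; exact absurd hh1s habs
    · rw [if_neg hex, Finset.sum_eq_zero]
      intro h hhs
      rw [if_neg (fun he => hex ⟨h, hhs, he⟩)]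
  have hind_nonneg : ∀ (s : Finset M) (j : J),
      0 ≤ (∑ h ∈ s, if f h = j then δ else 0) := by
    intro s j
    apply Finset.sum_nonneg
    intro h _
    split <;> [exact le_of_lt hδpos; exact le_rfl]
  have hind_le : ∀ (s : Finset M) (j : J),
      (∑ h ∈ s, if f h = j then δ else 0) ≤ δ := by
    intro s j
    rw [hind_job]
    split <;> [exact le_rfl; exact le_of_lt hδpos]
  have hind_zero : ∀ (s : Finset M) (j : J), (∀ h ∈ s, f h ≠ j) →
      (∑ h ∈ s, if f h = j then δ else 0) = 0 := by
    intro s j hz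
    rw [hind_job, if_neg]
    rintro ⟨h, hhs, he⟩
    exact hz h hhs he
  -- lower bound on y along the matching
  have hylow : ∀ (j : J) (h : M), f h = j → mult f ≤ y j h := by
    intro j h hfh
    rw [hyrep j h]
    calc mult f = (if f h = j then mult f else 0) := by rw [if_pos hfh]
      _ ≤ ∑ f' ∈ cols, if f' h = j then mult f' else 0 := by
          apply Finset.single_le_sum (f := fun f' => if f' h = j then mult f' else 0)
            (fun f' hf' => ?_) hf
          split
          · exact le_of_lt (hcols f' hf').2
          · exact le_rfl
  -- the new solution
  set y' : J → M → ℝ := fun j h => y j h - (if f h = j then δ else 0) with hy'def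
  set x1' : J → ℝ := fun j => x1 j - (if j = g then δ else 0) with hx1'def
  set x2' : J → ℝ := fun j => x2 j - (if j = k then δ else 0) with hx2'def
  have hmachsum : ∀ h : M, (∑ j, y' j h) = (∑ j, y j h) - δ := by
    intro h
    rw [hy'def]
    simp only
    rw [Finset.sum_sub_distrib, hind_mach]
  have hjobsum : ∀ j : J, (∑ h, y' j h) =
      (∑ h, y j h) - (∑ h, if f h = j then δ else 0) := by
    intro j
    rw [hy'def]
    simp only
    rw [Finset.sum_sub_distrib]
  have hpartsum : ∀ (s : Finset M) (j : J), (∑ h ∈ s, y' j h) =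
      (∑ h ∈ s, y j h) - (∑ h ∈ s, if f h = j then δ else 0) := by
    intro s j
    rw [hy'def]
    simp only
    rw [Finset.sum_sub_distrib]
  have hfeas' : FeasibleLP G1 G2 b a1 a2 rstar wstar y' x1' x2' (r - δ) (w - δ) := by
    refine ⟨⟨?_, ?_, ?_, ?_, ?_, ?_, ?_, ?_, ?_, ?_, ?_⟩, ?_, ?_⟩
    · -- machine constraints G1
      intro h hh
      obtain ⟨hl, hu⟩ := hC1 h hh
      rw [hmachsum h]
      constructor <;> linarith
    · intro h hh
      obtain ⟨hl, hu⟩ := hC2 h hh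
      rw [hmachsum h]
      constructor <;> linarith
    · -- per-job sum ≤ w - δ
      intro j
      rw [hjobsum j]
      by_cases hex : ∃ h, f h = j
      · have : (∑ h, if f h = j then δ else 0) = δ := by
          rw [hind_job]
          rw [if_pos]
          obtain ⟨h1, hh1⟩ := hex
          exact ⟨h1, Finset.mem_univ h1, hh1⟩
        rw [this]
        have := hCj j
        linarith
      · have hz : (∑ h, if f h = j then δ else 0) = 0 := by
          apply hind_zero
          intro h _ he
          exact hex ⟨h, he⟩
        rw [hz]
        have hs := hδ_le_slack j
        rw [hslackdef] at hs
        simp only [hex, if_false] at hs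
        linarith
    · -- 0 ≤ y' ≤ b
      intro j h
      obtain ⟨hy0, hyb⟩ := hCy j h
      rw [hy'def]
      simp only
      constructor
      · by_cases hfh : f h = j
        · rw [if_pos hfh]
          have := hylow j h hfh
          linarith
        · rw [if_neg hfh]
          linarith
      · split <;> linarith
    · -- sum x1' = r - δ
      rw [hx1'def]
      simp only
      rw [Finset.sum_sub_distrib, hX1, Finset.sum_ite_eq']
      simp
    · rw [hx2'def]
      simp only
      rw [Finset.sum_sub_distrib, hX2, Finset.sum_ite_eq']
      simp
    · -- x1' j + x2' j ≤ r - δ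
      intro j
      rw [hx1'def, hx2'def]
      simp only
      by_cases hjg : j = g
      · subst hjg
        rw [if_pos rfl, if_neg hgk]
        have := hXr j
        linarith
      · rw [if_neg hjg]
        by_cases hjk : j = k
        · subst hjk
          rw [if_pos rfl]
          have := hXr j
          linarith
        · rw [if_neg hjk]
          by_cases hB : j ∈ B1 ∪ B2
          · have hmem : j ∈ (B1 ∪ B2) \ {g, k} := by
              rw [Finset.mem_sdiff]
              refine ⟨hB, ?_⟩
              simp only [Finset.mem_insert, Finset.mem_singleton]
              tauto
            have := hεr_le j hmem
            linarith
          · rw [Finset.mem_union] at hB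
            push_neg at hB
            obtain ⟨hB1', hB2'⟩ := hB
            have h1 : ∃ z : ℤ, x1 j = (z : ℝ) := by
              by_contra hc
              exact hB1' ((hB1 j).2 hc)
            have h2 : ∃ z : ℤ, x2 j = (z : ℝ) := by
              by_contra hc
              exact hB2' ((hB2 j).2 hc)
            obtain ⟨z1, hz1⟩ := h1
            obtain ⟨z2, hz2⟩ := h2
            have hle : x1 j + x2 j ≤ r := hXr j
            rw [hz1, hz2, hrε] at hle ⊢
            have hzz : (z1 + z2 : ℤ) ≤ ⌊rstar⌋ := by
              have : ((z1 + z2 : ℤ) : ℝ) < ((⌊rstar⌋ + 1 : ℤ) : ℝ) := by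
                push_cast
                linarith
              have h2' : (z1 + z2 : ℤ) < ⌊rstar⌋ + 1 := by exact_mod_cast this
              omega
            have : ((z1 + z2 : ℤ) : ℝ) ≤ ((⌊rstar⌋ : ℤ) : ℝ) := Int.cast_le.2 hzz
            push_cast at this
            linarith
    · -- 0 ≤ x1' ≤ a1
      intro j
      obtain ⟨h0', h1'⟩ := hXa1 j
      rw [hx1'def]
      simp only
      constructor
      · by_cases hjg : j = g
        · subst hjg
          rw [if_pos rfl]
          linarith
        · rw [if_neg hjg]
          linarith
      · split <;> linarith
    · intro j
      obtain ⟨h0', h1'⟩ := hXa2 j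
      rw [hx2'def]
      simp only
      constructor
      · by_cases hjk : j = k
        · subst hjk
          rw [if_pos rfl]
          linarith
        · rw [if_neg hjk]
          linarith
      · split <;> linarith
    · -- job constraint with G1, a2, x2
      intro j
      have hold := hD2 j
      have hsub : (∑ h ∈ G1, ((b j h : ℝ) - y' j h)) =
          (∑ h ∈ G1, ((b j h : ℝ) - y j h)) + (∑ h ∈ G1, if f h = j then δ else 0) := by
        rw [hy'def]
        simp only
        rw [← Finset.sum_add_distrib]
        apply Finset.sum_congr rfl
        intro h _
        ring
      rw [hsub, hx2'def]
      simp only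
      by_cases hjk : j = k
      · subst hjk
        rw [if_pos rfl, hind_zero G1 j hk1]
        linarith
      · rw [if_neg hjk]
        have := hind_le G1 j
        linarith
    · -- job constraint with G2, a1, x1
      intro j
      have hold := hD1 j
      have hsub : (∑ h ∈ G2, ((b j h : ℝ) - y' j h)) =
          (∑ h ∈ G2, ((b j h : ℝ) - y j h)) + (∑ h ∈ G2, if f h = j then δ else 0) := by
        rw [hy'def]
        simp only
        rw [← Finset.sum_add_distrib]
        apply Finset.sum_congr rfl
        intro h _
        ring
      rw [hsub, hx1'def]
      simp only
      by_cases hjg : j = g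
      · subst hjg
        rw [if_pos rfl, hind_zero G2 j hg2]
        linarith
      · rw [if_neg hjg]
        have := hind_le G2 j
        linarith
    · -- w' - r' = ⌈wstar - rstar⌉
      rw [← hwrdiff]
      ring
    · -- ⌊rstar⌋ ≤ r - δ
      rw [hrε]
      linarith
  have := hopt _ _ _ _ _ hfeas'
  linarith
end
end

section
/- Let g, k, a, and b be four different jobs such that x_{g1} > 0, x_{k2} > 0, x_{a1} > 0, and x_{b2} > 0. If ε_r(g,k) > 0 and ε_r(a,b) > 0, then a column of type (∗, a, b, g, k ; ∗) does not exist in d(y,w) or a column of type (∗ ; ∗, a, b, k, g) does not exist in d(y,w); i.e., it is impossible that d(y,w) contains both a column matching all of a, b, g, k to machines of G1 and a column matching all of a, b, k, g to machines of G2. -/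
open Finset

noncomputable section

section Helpers
variable {J M : Type*} [DecidableEq J]

lemma aux_sum_ind_nonneg (S : Finset M) (f : M → J) (j : J) {c : ℝ} (hc : 0 ≤ c) :
    0 ≤ ∑ h ∈ S, if f h = j then c else 0 :=
  Finset.sum_nonneg fun _ _ => by split <;> simp [hc]

lemma aux_sum_ind_le (f : M → J) (hf : Function.Injective f) (S : Finset M) (j : J)
    {c : ℝ} (hc : 0 ≤ c) :
    (∑ h ∈ S, if f h = j then c else 0) ≤ c := by
  classical
  rw [← Finset.sum_filter]
  have hcard : (S.filter (fun h => f h = j)).card ≤ 1 := by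
    refine Finset.card_le_one.2 ?_
    intro a ha b hb
    simp only [Finset.mem_filter] at ha hb
    exact hf (ha.2.trans hb.2.symm)
  calc (∑ _h ∈ S.filter (fun h => f h = j), c)
      = (S.filter (fun h => f h = j)).card * c := by
        rw [Finset.sum_const, nsmul_eq_mul]
    _ ≤ 1 * c := by
        exact mul_le_mul_of_nonneg_right (by exact_mod_cast hcard) hc
    _ = c := one_mul c

lemma aux_sum_ind_eq (f : M → J) (hf : Function.Injective f) {S : Finset M} {j : J}
    (hex : ∃ h ∈ S, f h = j) (c : ℝ) :
    (∑ h ∈ S, if f h = j then c else 0) = c := by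
  obtain ⟨h0, hS0, hfh0⟩ := hex
  rw [Finset.sum_eq_single_of_mem h0 hS0]
  · rw [if_pos hfh0]
  · intro b _ hb
    rw [if_neg]
    intro hfb
    exact hb (hf (hfb.trans hfh0.symm))

lemma aux_sum_ind_zero (f : M → J) (hf : Function.Injective f) {S : Finset M} {j : J}
    {h' : M} (hfh' : f h' = j) (hh' : h' ∉ S) (c : ℝ) :
    (∑ h ∈ S, if f h = j then c else 0) = 0 := by
  refine Finset.sum_eq_zero fun h hh => ?_
  rw [if_neg]
  intro hfh
  exact hh' (by rwa [hf (hfh.trans hfh'.symm)] at hh)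

end Helpers
theorem no_pair_of_full_columns
    {J M : Type*} [Fintype J] [Fintype M] [DecidableEq J] [DecidableEq M]
    (G1 G2 : Finset M) (hG1ne : G1.Nonempty) (hG2ne : G2.Nonempty)
    (hdisj : Disjoint G1 G2) (hcover : G1 ∪ G2 = Finset.univ)
    (b : J → M → ℕ) (a1 a2 : J → ℕ)
    (ystar : J → M → ℝ) (x1star x2star : J → ℝ) (rstar wstar : ℝ)
    (hstar : FeasibleS G1 G2 b a1 a2 ystar x1star x2star rstar wstar)
    (hstaropt : ∀ y' x1' x2' r' w', FeasibleS G1 G2 b a1 a2 y' x1' x2' r' w' →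
      wstar - rstar ≤ w' - r')
    (y : J → M → ℝ) (x1 x2 : J → ℝ) (r w : ℝ)
    (hfeas : FeasibleLP G1 G2 b a1 a2 rstar wstar y x1 x2 r w)
    (hopt : ∀ y' x1' x2' r' w',
      FeasibleLP G1 G2 b a1 a2 rstar wstar y' x1' x2' r' w' → r ≤ r')
    (ε : ℝ) (hε0 : 0 < ε) (hε1 : ε < 1) (hrε : r = (⌊rstar⌋ : ℝ) + ε)
    (B1 B2 : Finset J)
    (hB1 : ∀ j, j ∈ B1 ↔ ¬∃ z : ℤ, x1 j = (z : ℝ))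
    (hB2 : ∀ j, j ∈ B2 ↔ ¬∃ z : ℤ, x2 j = (z : ℝ))
    (cols : Finset (M → J)) (mult : (M → J) → ℝ)
    (hrep : IsColRep y w cols mult)
    (g k ja jb : J)
    (hgk : g ≠ k) (hgja : g ≠ ja) (hgjb : g ≠ jb)
    (hkja : k ≠ ja) (hkjb : k ≠ jb) (hjajb : ja ≠ jb)
    (hxg : 0 < x1 g) (hxk : 0 < x2 k) (hxa : 0 < x1 ja) (hxb : 0 < x2 jb)
    (he1 : 0 < epsR B1 B2 x1 x2 r ε g k)
    (he2 : 0 < epsR B1 B2 x1 x2 r ε ja jb) :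
    (¬ ∃ f ∈ cols, (∃ h ∈ G1, f h = ja) ∧ (∃ h ∈ G1, f h = jb) ∧
        (∃ h ∈ G1, f h = g) ∧ (∃ h ∈ G1, f h = k)) ∨
    (¬ ∃ f ∈ cols, (∃ h ∈ G2, f h = ja) ∧ (∃ h ∈ G2, f h = jb) ∧
        (∃ h ∈ G2, f h = k) ∧ (∃ h ∈ G2, f h = g)) := by
  classical
  by_contra hcontra
  push_neg at hcontra
  obtain ⟨⟨f1, hf1mem, hja1, hjb1, hg1, hk1⟩, ⟨f2, hf2mem, hja2, hjb2, hk2, hg2⟩⟩ := hcontra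
  -- unpack column structure
  obtain ⟨⟨inj1, _, cov1⟩, hmf1⟩ := hrep.1 f1 hf1mem
  obtain ⟨⟨inj2, _, cov2⟩, hmf2⟩ := hrep.1 f2 hf2mem
  have hyrep := hrep.2.2
  -- f1 ≠ f2
  obtain ⟨hg1m, hg1G, hg1e⟩ := hg1
  obtain ⟨hg2m, hg2G, hg2e⟩ := hg2
  have hf1f2 : f1 ≠ f2 := by
    intro hEq
    have hne : hg1m ≠ hg2m := fun hmm => (Finset.disjoint_left.1 hdisj hg1G) (hmm ▸ hg2G)
    have hE : f2 hg1m = g := hEq ▸ hg1e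
    exact hne (inj2 (hE.trans hg2e.symm))
  -- unpack feasibility
  obtain ⟨hS, hwreq, hrlb⟩ := hfeas
  obtain ⟨hM1, hM2, hjl, hyb, hsx1, hsx2, hxr, hx1b, hx2b, hc1, hc2⟩ := hS
  -- slack of non-tight jobs
  set σ : ℝ := Finset.univ.inf' (Finset.univ_nonempty_iff.mpr ⟨g⟩)
      (fun j => if (∑ h, y j h) = w then (1:ℝ) else w - ∑ h, y j h) with hσ
  have hσpos : 0 < σ := by
    rw [hσ, Finset.lt_inf'_iff]
    intro j _
    split
    · exact one_pos
    · next hne => exact sub_pos.2 (lt_of_le_of_ne (hjl j) hne)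
  have hσle : ∀ j, (∑ h, y j h) ≠ w → σ ≤ w - ∑ h, y j h := by
    intro j hne
    have := Finset.inf'_le (fun j => if (∑ h, y j h) = w then (1:ℝ) else w - ∑ h, y j h)
      (Finset.mem_univ j)
    rw [if_neg hne] at this
    exact le_trans (le_of_eq hσ) this
  -- the perturbation size
  set δ : ℝ := min ε (min (epsR B1 B2 x1 x2 r ε g k) (min (epsR B1 B2 x1 x2 r ε ja jb)
      (min (x1 g) (min (x2 k) (min (x1 ja) (min (x2 jb)
      (min (mult f1) (min (mult f2) σ)))))))) with hδ
  have hδpos : 0 < δ := by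
    rw [hδ]
    simp only [lt_min_iff]
    exact ⟨hε0, he1, he2, hxg, hxk, hxa, hxb, hmf1, hmf2, hσpos⟩
  have hδε : δ ≤ ε := min_le_left _ _
  have hδe1 : δ ≤ epsR B1 B2 x1 x2 r ε g k :=
    le_trans (min_le_right _ _) (min_le_left _ _)
  have hδe2 : δ ≤ epsR B1 B2 x1 x2 r ε ja jb :=
    le_trans (min_le_right _ _) (le_trans (min_le_right _ _) (min_le_left _ _))
  have hδxg : δ ≤ x1 g := le_trans (min_le_right _ _) (le_trans (min_le_right _ _)
    (le_trans (min_le_right _ _) (min_le_left _ _)))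
  have hδxk : δ ≤ x2 k := le_trans (min_le_right _ _) (le_trans (min_le_right _ _)
    (le_trans (min_le_right _ _) (le_trans (min_le_right _ _) (min_le_left _ _))))
  have hδxa : δ ≤ x1 ja := le_trans (min_le_right _ _) (le_trans (min_le_right _ _)
    (le_trans (min_le_right _ _) (le_trans (min_le_right _ _)
    (le_trans (min_le_right _ _) (min_le_left _ _)))))
  have hδxb : δ ≤ x2 jb := le_trans (min_le_right _ _) (le_trans (min_le_right _ _)
    (le_trans (min_le_right _ _) (le_trans (min_le_right _ _)
    (le_trans (min_le_right _ _) (le_trans (min_le_right _ _) (min_le_left _ _))))))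
  have hδm1 : δ ≤ mult f1 := le_trans (min_le_right _ _) (le_trans (min_le_right _ _)
    (le_trans (min_le_right _ _) (le_trans (min_le_right _ _)
    (le_trans (min_le_right _ _) (le_trans (min_le_right _ _)
    (le_trans (min_le_right _ _) (min_le_left _ _)))))))
  have hδm2 : δ ≤ mult f2 := le_trans (min_le_right _ _) (le_trans (min_le_right _ _)
    (le_trans (min_le_right _ _) (le_trans (min_le_right _ _)
    (le_trans (min_le_right _ _) (le_trans (min_le_right _ _)
    (le_trans (min_le_right _ _) (le_trans (min_le_right _ _) (min_le_left _ _))))))))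
  have hδσ : δ ≤ σ := le_trans (min_le_right _ _) (le_trans (min_le_right _ _)
    (le_trans (min_le_right _ _) (le_trans (min_le_right _ _)
    (le_trans (min_le_right _ _) (le_trans (min_le_right _ _)
    (le_trans (min_le_right _ _) (le_trans (min_le_right _ _) (min_le_right _ _))))))))
  have hδ2 : 0 ≤ δ / 2 := by linarith
  -- slack bounds from epsR
  have hslack : ∀ p q j : J, j ∈ B1 ∪ B2 → j ≠ p → j ≠ q →
      epsR B1 B2 x1 x2 r ε p q ≤ r - (x1 j + x2 j) := by
    intro p q j hj hjp hjq
    have hmem : j ∈ (B1 ∪ B2) \ {p, q} := by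
      simp [Finset.mem_sdiff, hj, hjp, hjq]
    rw [epsR, dif_pos ⟨j, hmem⟩]
    exact le_trans (min_le_left _ _) (Finset.inf'_le _ hmem)
  have hint : ∀ j, j ∉ B1 → j ∉ B2 → x1 j + x2 j ≤ r - ε := by
    intro j h1 h2
    have e1 : ∃ z : ℤ, x1 j = z := by
      by_contra hcc; exact h1 ((hB1 j).2 hcc)
    have e2 : ∃ z : ℤ, x2 j = z := by
      by_contra hcc; exact h2 ((hB2 j).2 hcc)
    obtain ⟨z1, hz1⟩ := e1
    obtain ⟨z2, hz2⟩ := e2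
    have hle : x1 j + x2 j ≤ r := hxr j
    rw [hz1, hz2, hrε] at hle ⊢
    have h1' : ((z1 + z2 : ℤ) : ℝ) < ((⌊rstar⌋ + 1 : ℤ) : ℝ) := by push_cast; linarith
    have h2' : z1 + z2 ≤ ⌊rstar⌋ := by
      have : z1 + z2 < ⌊rstar⌋ + 1 := by exact_mod_cast h1'
      omega
    have h3' : ((z1 + z2 : ℤ) : ℝ) ≤ (⌊rstar⌋ : ℝ) := by exact_mod_cast h2'
    push_cast at h3' ⊢
    linarith
  have hall : ∀ j, x1 j + x2 j ≤ r - δ := by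
    have hbound : ∀ j, j ≠ g → j ≠ k → x1 j + x2 j ≤ r - δ := by
      intro j hjg hjk
      by_cases hj : j ∈ B1 ∪ B2
      · have := hslack g k j hj hjg hjk
        linarith
      · rw [Finset.mem_union, not_or] at hj
        have := hint j hj.1 hj.2
        linarith
    have hbound' : ∀ j, j ≠ ja → j ≠ jb → x1 j + x2 j ≤ r - δ := by
      intro j hjg hjk
      by_cases hj : j ∈ B1 ∪ B2
      · have := hslack ja jb j hj hjg hjk
        linarith
      · rw [Finset.mem_union, not_or] at hj
        have := hint j hj.1 hj.2
        linarith
    intro j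
    by_cases hjg : j = g
    · subst hjg; exact hbound' j hgja hgjb
    by_cases hjk : j = k
    · subst hjk; exact hbound' j hkja hkjb
    exact hbound j hjg hjk
  -- the perturbed solution
  set y' : J → M → ℝ := fun j h =>
    y j h - (if f1 h = j then δ/2 else 0) - (if f2 h = j then δ/2 else 0) with hy'
  set x1' : J → ℝ := fun j => x1 j - (if j = g then δ/2 else 0) - (if j = ja then δ/2 else 0)
    with hx1'
  set x2' : J → ℝ := fun j => x2 j - (if j = k then δ/2 else 0) - (if j = jb then δ/2 else 0)
    with hx2'
  have hsumy' : ∀ h, (∑ j, y' j h) = (∑ j, y j h) - δ := by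
    intro h
    have : (∑ j, y' j h) = (∑ j, y j h) - δ/2 - δ/2 := by
      simp [hy', Finset.sum_sub_distrib, Finset.sum_ite_eq]
    linarith
  have hsumx1' : (∑ j, x1' j) = r - δ := by
    have : (∑ j, x1' j) = (∑ j, x1 j) - δ/2 - δ/2 := by
      simp [hx1', Finset.sum_sub_distrib, Finset.sum_ite_eq']
    rw [hsx1] at this
    linarith
  have hsumx2' : (∑ j, x2' j) = r - δ := by
    have : (∑ j, x2' j) = (∑ j, x2 j) - δ/2 - δ/2 := by
      simp [hx2', Finset.sum_sub_distrib, Finset.sum_ite_eq']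
    rw [hsx2] at this
    linarith
  have hsplit : ∀ (S : Finset M) (j : J),
      (∑ h ∈ S, ((b j h : ℝ) - y' j h)) = (∑ h ∈ S, ((b j h : ℝ) - y j h))
        + (∑ h ∈ S, if f1 h = j then δ/2 else 0) + (∑ h ∈ S, if f2 h = j then δ/2 else 0) := by
    intro S j
    rw [← Finset.sum_add_distrib, ← Finset.sum_add_distrib]
    refine Finset.sum_congr rfl fun h _ => ?_
    simp only [hy']
    ring
  have hfeasS : FeasibleS G1 G2 b a1 a2 y' x1' x2' (r - δ) (w - δ) := by
    refine ⟨?_, ?_, ?_, ?_, hsumx1', hsumx2', ?_, ?_, ?_, ?_, ?_⟩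
    · intro h hh
      rw [hsumy' h]
      exact ⟨by linarith [(hM1 h hh).1], by linarith [(hM1 h hh).2]⟩
    · intro h hh
      rw [hsumy' h]
      exact ⟨by linarith [(hM2 h hh).1], by linarith [(hM2 h hh).2]⟩
    · -- job loads
      intro j
      have hsplit' : (∑ h, y' j h) = (∑ h, y j h)
          - (∑ h, if f1 h = j then δ/2 else 0) - (∑ h, if f2 h = j then δ/2 else 0) := by
        rw [← Finset.sum_sub_distrib, ← Finset.sum_sub_distrib]
      rw [hsplit']
      by_cases ht : (∑ h, y j h) = w
      · have t1 : (∑ h, if f1 h = j then δ/2 else 0) = δ/2 := by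
          obtain ⟨h0, hh0⟩ := cov1 j ht
          exact aux_sum_ind_eq f1 inj1 ⟨h0, Finset.mem_univ h0, hh0⟩ _
        have t2 : (∑ h, if f2 h = j then δ/2 else 0) = δ/2 := by
          obtain ⟨h0, hh0⟩ := cov2 j ht
          exact aux_sum_ind_eq f2 inj2 ⟨h0, Finset.mem_univ h0, hh0⟩ _
        rw [ht, t1, t2]
        linarith
      · have := hσle j ht
        have t1 := aux_sum_ind_nonneg Finset.univ f1 j hδ2
        have t2 := aux_sum_ind_nonneg Finset.univ f2 j hδ2
        linarith
    · -- bounds on y'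
      intro j h
      constructor
      · -- 0 ≤ y'
        simp only [hy']
        by_cases h1 : f1 h = j <;> by_cases h2 : f2 h = j
        · have hsub : ({f1, f2} : Finset (M → J)) ⊆ cols := by
            intro f hf
            rcases Finset.mem_insert.1 hf with hf | hf
            · exact hf ▸ hf1mem
            · exact (Finset.mem_singleton.1 hf) ▸ hf2mem
          have hpair : mult f1 + mult f2 ≤ y j h := by
            rw [hyrep j h]
            calc mult f1 + mult f2
                = ∑ f ∈ ({f1, f2} : Finset (M → J)), if f h = j then mult f else 0 := by
                  rw [Finset.sum_pair hf1f2, if_pos h1, if_pos h2]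
              _ ≤ ∑ f ∈ cols, if f h = j then mult f else 0 := by
                  refine Finset.sum_le_sum_of_subset_of_nonneg hsub fun f hf _ => ?_
                  by_cases hc : f h = j <;> simp [hc, (hrep.1 f hf).2.le]
          rw [if_pos h1, if_pos h2]
          linarith
        · have hone : mult f1 ≤ y j h := by
            rw [hyrep j h]
            calc mult f1 = ∑ f ∈ ({f1} : Finset (M → J)), if f h = j then mult f else 0 := by
                  simp [h1]
              _ ≤ ∑ f ∈ cols, if f h = j then mult f else 0 := by
                  refine Finset.sum_le_sum_of_subset_of_nonneg (by simpa using hf1mem)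
                    fun f hf _ => ?_
                  by_cases hc : f h = j <;> simp [hc, (hrep.1 f hf).2.le]
          rw [if_pos h1, if_neg h2]
          linarith
        · have hone : mult f2 ≤ y j h := by
            rw [hyrep j h]
            calc mult f2 = ∑ f ∈ ({f2} : Finset (M → J)), if f h = j then mult f else 0 := by
                  simp [h2]
              _ ≤ ∑ f ∈ cols, if f h = j then mult f else 0 := by
                  refine Finset.sum_le_sum_of_subset_of_nonneg (by simpa using hf2mem)
                    fun f hf _ => ?_
                  by_cases hc : f h = j <;> simp [hc, (hrep.1 f hf).2.le]
          rw [if_neg h1, if_pos h2]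
          linarith
        · rw [if_neg h1, if_neg h2]
          simpa using (hyb j h).1
      · -- y' ≤ b
        simp only [hy']
        have := (hyb j h).2
        have i1 : (0:ℝ) ≤ if f1 h = j then δ/2 else 0 := by split <;> simp [hδ2]
        have i2 : (0:ℝ) ≤ if f2 h = j then δ/2 else 0 := by split <;> simp [hδ2]
        linarith
    · -- x1' + x2' ≤ r - δ
      intro j
      have i1 : (0:ℝ) ≤ if j = g then δ/2 else 0 := by split <;> simp [hδ2]
      have i2 : (0:ℝ) ≤ if j = ja then δ/2 else 0 := by split <;> simp [hδ2]
      have i3 : (0:ℝ) ≤ if j = k then δ/2 else 0 := by split <;> simp [hδ2]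
      have i4 : (0:ℝ) ≤ if j = jb then δ/2 else 0 := by split <;> simp [hδ2]
      simp only [hx1', hx2']
      have := hall j
      linarith
    · -- bounds on x1'
      intro j
      simp only [hx1']
      constructor
      · by_cases h1 : j = g
        · subst h1
          rw [if_pos rfl, if_neg hgja]
          linarith
        by_cases h2 : j = ja
        · subst h2
          rw [if_neg h1, if_pos rfl]
          linarith
        · rw [if_neg h1, if_neg h2]
          simpa using (hx1b j).1
      · have i1 : (0:ℝ) ≤ if j = g then δ/2 else 0 := by split <;> simp [hδ2]
        have i2 : (0:ℝ) ≤ if j = ja then δ/2 else 0 := by split <;> simp [hδ2]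
        have := (hx1b j).2
        linarith
    · -- bounds on x2'
      intro j
      simp only [hx2']
      constructor
      · by_cases h1 : j = k
        · subst h1
          rw [if_pos rfl, if_neg hkjb]
          linarith
        by_cases h2 : j = jb
        · subst h2
          rw [if_neg h1, if_pos rfl]
          linarith
        · rw [if_neg h1, if_neg h2]
          simpa using (hx2b j).1
      · have i1 : (0:ℝ) ≤ if j = k then δ/2 else 0 := by split <;> simp [hδ2]
        have i2 : (0:ℝ) ≤ if j = jb then δ/2 else 0 := by split <;> simp [hδ2]
        have := (hx2b j).2
        linarith
    · -- family 1 per-job constraints, machines in G1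
      intro j
      rw [hsplit G1 j]
      simp only [hx2']
      have horig := hc1 j
      have t1le := aux_sum_ind_le f1 inj1 G1 j hδ2
      have t2le := aux_sum_ind_le f2 inj2 G1 j hδ2
      have t1ge := aux_sum_ind_nonneg G1 f1 j hδ2
      have t2ge := aux_sum_ind_nonneg G1 f2 j hδ2
      by_cases h1 : j = k
      · subst h1
        obtain ⟨h0, hh0G, hh0e⟩ := hk2
        have t2 : (∑ h ∈ G1, if f2 h = j then δ/2 else 0) = 0 :=
          aux_sum_ind_zero f2 inj2 hh0e (Finset.disjoint_right.1 hdisj hh0G) _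
        rw [if_pos rfl, if_neg hkjb, t2]
        linarith
      by_cases h2 : j = jb
      · subst h2
        obtain ⟨h0, hh0G, hh0e⟩ := hjb2
        have t2 : (∑ h ∈ G1, if f2 h = j then δ/2 else 0) = 0 :=
          aux_sum_ind_zero f2 inj2 hh0e (Finset.disjoint_right.1 hdisj hh0G) _
        rw [if_neg h1, if_pos rfl, t2]
        linarith
      · rw [if_neg h1, if_neg h2]
        linarith
    · -- family 2 per-job constraints, machines in G2
      intro j
      rw [hsplit G2 j]
      simp only [hx1']
      have horig := hc2 j
      have t1le := aux_sum_ind_le f1 inj1 G2 j hδ2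
      have t2le := aux_sum_ind_le f2 inj2 G2 j hδ2
      have t1ge := aux_sum_ind_nonneg G2 f1 j hδ2
      have t2ge := aux_sum_ind_nonneg G2 f2 j hδ2
      by_cases h1 : j = g
      · subst h1
        have t1 : (∑ h ∈ G2, if f1 h = j then δ/2 else 0) = 0 :=
          aux_sum_ind_zero f1 inj1 hg1e (Finset.disjoint_left.1 hdisj hg1G) _
        rw [if_pos rfl, if_neg hgja, t1]
        linarith
      by_cases h2 : j = ja
      · subst h2
        obtain ⟨h0, hh0G, hh0e⟩ := hja1
        have t1 : (∑ h ∈ G2, if f1 h = j then δ/2 else 0) = 0 :=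
          aux_sum_ind_zero f1 inj1 hh0e (Finset.disjoint_left.1 hdisj hh0G) _
        rw [if_neg h1, if_pos rfl, t1]
        linarith
      · rw [if_neg h1, if_neg h2]
        linarith
  have hfeasLP : FeasibleLP G1 G2 b a1 a2 rstar wstar y' x1' x2' (r - δ) (w - δ) := by
    refine ⟨hfeasS, ?_, ?_⟩
    · rw [show w - δ - (r - δ) = w - r by ring]
      exact hwreq
    · rw [hrε]
      linarith
  have := hopt y' x1' x2' (r - δ) (w - δ) hfeasLP
  linarith
end
end

section
/- Let g, k, and a be three different jobs such that x_{g1} > 0, x_{k2} > 0, and x_{a1}·x_{a2} > 0. If ε_r(g,a) > 0 and ε_r(a,k) > 0, then a column of type (∗, a, g, k ; ∗) does not exist in d(y,w) or a column of type (∗ ; ∗, a, k, g) does not exist in d(y,w). -/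
open Finset

noncomputable section

section Helpers

variable {J M : Type*} [DecidableEq J]

lemma sum_ite_inj_eq {f : M → J} (hf : Function.Injective f) {S : Finset M}
    {h0 : M} (hh0 : h0 ∈ S) {j : J} (hj : f h0 = j) (c : ℝ) :
    (∑ h ∈ S, if f h = j then c else 0) = c := by
  rw [Finset.sum_eq_single_of_mem h0 hh0]
  · simp [hj]
  · intro b _ hb
    have : f b ≠ j := fun he => hb (hf (he.trans hj.symm))
    simp [this]

lemma sum_ite_inj_le {f : M → J} (hf : Function.Injective f) (S : Finset M)
    (j : J) {c : ℝ} (hc : 0 ≤ c) :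
    (∑ h ∈ S, if f h = j then c else 0) ≤ c := by
  by_cases hex : ∃ h0 ∈ S, f h0 = j
  · obtain ⟨h0, h1, h2⟩ := hex
    rw [sum_ite_inj_eq hf h1 h2]
  · push_neg at hex
    rw [Finset.sum_eq_zero (fun h hh => by simp [hex h hh])]
    exact hc

lemma sum_ite_nonneg (f : M → J) (S : Finset M) (j : J) {c : ℝ} (hc : 0 ≤ c) :
    0 ≤ (∑ h ∈ S, if f h = j then c else 0) := by
  refine Finset.sum_nonneg fun h _ => ?_
  split_ifs <;> simp [hc]

lemma sum_ite_zero {f : M → J} (S : Finset M) {j : J}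
    (hno : ∀ h ∈ S, f h ≠ j) (c : ℝ) :
    (∑ h ∈ S, if f h = j then c else 0) = 0 :=
  Finset.sum_eq_zero fun h hh => by simp [hno h hh]

end Helpers

theorem no_pair_of_full_columns_three_jobs
    {J M : Type*} [Fintype J] [Fintype M] [DecidableEq J] [DecidableEq M]
    (G1 G2 : Finset M) (hG1ne : G1.Nonempty) (hG2ne : G2.Nonempty)
    (hdisj : Disjoint G1 G2) (hcover : G1 ∪ G2 = Finset.univ)
    (b : J → M → ℕ) (a1 a2 : J → ℕ)
    (ystar : J → M → ℝ) (x1star x2star : J → ℝ) (rstar wstar : ℝ)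
    (hstar : FeasibleS G1 G2 b a1 a2 ystar x1star x2star rstar wstar)
    (hstaropt : ∀ y' x1' x2' r' w', FeasibleS G1 G2 b a1 a2 y' x1' x2' r' w' →
      wstar - rstar ≤ w' - r')
    (y : J → M → ℝ) (x1 x2 : J → ℝ) (r w : ℝ)
    (hfeas : FeasibleLP G1 G2 b a1 a2 rstar wstar y x1 x2 r w)
    (hopt : ∀ y' x1' x2' r' w',
      FeasibleLP G1 G2 b a1 a2 rstar wstar y' x1' x2' r' w' → r ≤ r')
    (ε : ℝ) (hε0 : 0 < ε) (hε1 : ε < 1) (hrε : r = (⌊rstar⌋ : ℝ) + ε)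
    (B1 B2 : Finset J)
    (hB1 : ∀ j, j ∈ B1 ↔ ¬∃ z : ℤ, x1 j = (z : ℝ))
    (hB2 : ∀ j, j ∈ B2 ↔ ¬∃ z : ℤ, x2 j = (z : ℝ))
    (cols : Finset (M → J)) (mult : (M → J) → ℝ)
    (hrep : IsColRep y w cols mult)
    (g k ja : J)
    (hgk : g ≠ k) (hgja : g ≠ ja) (hkja : k ≠ ja)
    (hxg : 0 < x1 g) (hxk : 0 < x2 k) (hxa : 0 < x1 ja * x2 ja)
    (he1 : 0 < epsR B1 B2 x1 x2 r ε g ja)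
    (he2 : 0 < epsR B1 B2 x1 x2 r ε ja k) :
    (¬ ∃ f ∈ cols, (∃ h ∈ G1, f h = ja) ∧ (∃ h ∈ G1, f h = g) ∧
        (∃ h ∈ G1, f h = k)) ∨
    (¬ ∃ f ∈ cols, (∃ h ∈ G2, f h = ja) ∧ (∃ h ∈ G2, f h = k) ∧
        (∃ h ∈ G2, f h = g)) := by
  classical
  by_contra hcon
  push_neg at hcon
  obtain ⟨⟨f1, hf1c, ⟨hA1, hA1G, hA1e⟩, ⟨hGg1, hGg1G, hGg1e⟩, ⟨hGk1, hGk1G, hGk1e⟩⟩,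
          ⟨f2, hf2c, ⟨hA2, hA2G, hA2e⟩, ⟨hGk2, hGk2G, hGk2e⟩, ⟨hGg2, hGg2G, hGg2e⟩⟩⟩ := hcon
  obtain ⟨hfS, hwr, hrlb⟩ := hfeas
  obtain ⟨hS1, hS2, hS3, hS4, hSx1, hSx2, hSx12, hSb1, hSb2, hSc1, hSc2⟩ := hfS
  obtain ⟨hcols, hmultsum, hyrep⟩ := hrep
  obtain ⟨⟨hinj1, hpos1, hcov1⟩, hm1⟩ := hcols f1 hf1c
  obtain ⟨⟨hinj2, hpos2, hcov2⟩, hm2⟩ := hcols f2 hf2c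
  have hMne : (univ : Finset M).Nonempty := ⟨hA1, mem_univ _⟩
  have hJne : (univ : Finset J).Nonempty := ⟨ja, mem_univ _⟩
  -- positivity of x components at ja
  have hx1a : 0 < x1 ja := by
    rcases (hSb1 ja).1.lt_or_eq with h | h
    · exact h
    · exfalso; rw [← h] at hxa; simp at hxa
  have hx2a : 0 < x2 ja := by
    rcases (hSb2 ja).1.lt_or_eq with h | h
    · exact h
    · exfalso; rw [← h] at hxa; simp at hxa
  -- positive slack for every job other than ja
  have hspos : ∀ j : J, j ≠ ja → 0 < r - (x1 j + x2 j) := by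
    intro j hj
    by_cases hjB : j ∈ B1 ∪ B2
    · by_cases hjg : j = g
      · subst hjg
        have hmem : j ∈ (B1 ∪ B2) \ {ja, k} := by
          simp only [Finset.mem_sdiff, Finset.mem_insert, Finset.mem_singleton]
          exact ⟨hjB, by push_neg; exact ⟨hgja, hgk⟩⟩
        have hne : ((B1 ∪ B2) \ ({ja, k} : Finset J)).Nonempty := ⟨j, hmem⟩
        unfold epsR at he2
        rw [dif_pos hne] at he2
        have h1 := Finset.inf'_le (fun j' => r - (x1 j' + x2 j')) hmem
        have h2 := min_le_left (((B1 ∪ B2) \ ({ja, k} : Finset J)).inf' hne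
          (fun j' => r - (x1 j' + x2 j'))) ε
        linarith
      · have hmem : j ∈ (B1 ∪ B2) \ {g, ja} := by
          simp only [Finset.mem_sdiff, Finset.mem_insert, Finset.mem_singleton]
          exact ⟨hjB, by push_neg; exact ⟨hjg, hj⟩⟩
        have hne : ((B1 ∪ B2) \ ({g, ja} : Finset J)).Nonempty := ⟨j, hmem⟩
        unfold epsR at he1
        rw [dif_pos hne] at he1
        have h1 := Finset.inf'_le (fun j' => r - (x1 j' + x2 j')) hmem
        have h2 := min_le_left (((B1 ∪ B2) \ ({g, ja} : Finset J)).inf' hne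
          (fun j' => r - (x1 j' + x2 j'))) ε
        linarith
    · rw [Finset.mem_union] at hjB
      push_neg at hjB
      obtain ⟨hj1, hj2⟩ := hjB
      have hz1 : ∃ z : ℤ, x1 j = (z : ℝ) := not_not.mp (fun hc => hj1 ((hB1 j).mpr hc))
      have hz2 : ∃ z : ℤ, x2 j = (z : ℝ) := not_not.mp (fun hc => hj2 ((hB2 j).mpr hc))
      obtain ⟨z1, hz1⟩ := hz1
      obtain ⟨z2, hz2⟩ := hz2
      have hle : x1 j + x2 j ≤ r := hSx12 j
      have hlt : (z1 : ℝ) + (z2 : ℝ) < (⌊rstar⌋ : ℝ) + 1 := by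
        rw [← hz1, ← hz2]; rw [hrε] at hle; linarith
      have hint : z1 + z2 < ⌊rstar⌋ + 1 := by exact_mod_cast hlt
      have hile : z1 + z2 ≤ ⌊rstar⌋ := by omega
      have : (z1 : ℝ) + (z2 : ℝ) ≤ (⌊rstar⌋ : ℝ) := by exact_mod_cast hile
      rw [hz1, hz2, hrε]
      linarith
  -- choose the perturbation size δ
  set Ymin := (univ : Finset M).inf' hMne (fun h => min (y (f1 h) h) (y (f2 h) h)) with hYmin
  set Wmin := (univ : Finset J).inf' hJne
    (fun j => if (∑ h, y j h) = w then ε else w - ∑ h, y j h) with hWmin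
  set Smin := (univ : Finset J).inf' hJne
    (fun j => if j = ja then ε else r - (x1 j + x2 j)) with hSmin
  set Xmin := min (x1 g) (min (x2 k) (min (x1 ja) (x2 ja))) with hXmin
  set δ := min ε (min Xmin (min Ymin (min Wmin Smin))) with hδdef
  have hδε : δ ≤ ε := min_le_left _ _
  have hδX : δ ≤ Xmin := le_trans (min_le_right _ _) (min_le_left _ _)
  have hδY : δ ≤ Ymin :=
    le_trans (min_le_right _ _) (le_trans (min_le_right _ _) (min_le_left _ _))
  have hδWm : δ ≤ Wmin :=
    le_trans (min_le_right _ _) (le_trans (min_le_right _ _)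
      (le_trans (min_le_right _ _) (min_le_left _ _)))
  have hδSm : δ ≤ Smin :=
    le_trans (min_le_right _ _) (le_trans (min_le_right _ _)
      (le_trans (min_le_right _ _) (min_le_right _ _)))
  have hδx1g : δ ≤ x1 g := le_trans hδX (min_le_left _ _)
  have hδx2k : δ ≤ x2 k := le_trans hδX (le_trans (min_le_right _ _) (min_le_left _ _))
  have hδx1a : δ ≤ x1 ja := le_trans hδX (le_trans (min_le_right _ _)
    (le_trans (min_le_right _ _) (min_le_left _ _)))
  have hδx2a : δ ≤ x2 ja := le_trans hδX (le_trans (min_le_right _ _)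
    (le_trans (min_le_right _ _) (min_le_right _ _)))
  have hδY1 : ∀ h : M, δ ≤ y (f1 h) h := fun h =>
    hδY.trans ((Finset.inf'_le _ (mem_univ h)).trans (min_le_left _ _))
  have hδY2 : ∀ h : M, δ ≤ y (f2 h) h := fun h =>
    hδY.trans ((Finset.inf'_le _ (mem_univ h)).trans (min_le_right _ _))
  have hδW : ∀ j : J, (∑ h, y j h) ≠ w → δ ≤ w - ∑ h, y j h := by
    intro j hj
    have := hδWm.trans (Finset.inf'_le
      (fun j => if (∑ h, y j h) = w then ε else w - ∑ h, y j h) (mem_univ j))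
    rwa [if_neg hj] at this
  have hδS : ∀ j : J, j ≠ ja → δ ≤ r - (x1 j + x2 j) := by
    intro j hj
    have := hδSm.trans (Finset.inf'_le
      (fun j => if j = ja then ε else r - (x1 j + x2 j)) (mem_univ j))
    rwa [if_neg hj] at this
  have hδpos : 0 < δ := by
    refine lt_min hε0 (lt_min ?_ (lt_min ?_ (lt_min ?_ ?_)))
    · exact lt_min hxg (lt_min hxk (lt_min hx1a hx2a))
    · rw [hYmin, Finset.lt_inf'_iff]
      exact fun h _ => lt_min (hpos1 h) (hpos2 h)
    · rw [hWmin, Finset.lt_inf'_iff]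
      intro j _
      split_ifs with h
      · exact hε0
      · have := hS3 j
        have : (∑ h, y j h) < w := lt_of_le_of_ne this h
        linarith
    · rw [hSmin, Finset.lt_inf'_iff]
      intro j _
      split_ifs with h
      · exact hε0
      · exact hspos j h
  -- the perturbed solution
  set Y' : J → M → ℝ := fun j h =>
    y j h - ((if f1 h = j then δ / 2 else 0) + (if f2 h = j then δ / 2 else 0)) with hY'
  set X1' : J → ℝ := fun j =>
    x1 j - ((if j = ja then δ / 2 else 0) + (if j = g then δ / 2 else 0)) with hX1'
  set X2' : J → ℝ := fun j =>
    x2 j - ((if j = ja then δ / 2 else 0) + (if j = k then δ / 2 else 0)) with hX2'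
  have hmsum : ∀ h : M, (∑ j, Y' j h) = (∑ j, y j h) - δ := by
    intro h
    simp only [hY']
    rw [Finset.sum_sub_distrib, Finset.sum_add_distrib,
      Finset.sum_ite_eq univ (f1 h) (fun _ => δ / 2),
      Finset.sum_ite_eq univ (f2 h) (fun _ => δ / 2)]
    simp
  have hjobsub : ∀ j : J, (∑ h, Y' j h) =
      (∑ h, y j h) - ((∑ h, if f1 h = j then δ / 2 else 0)
        + (∑ h, if f2 h = j then δ / 2 else 0)) := by
    intro j
    simp only [hY']
    rw [Finset.sum_sub_distrib, Finset.sum_add_distrib]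
  have hGsub : ∀ (S : Finset M) (j : J), (∑ h ∈ S, ((b j h : ℝ) - Y' j h)) =
      (∑ h ∈ S, ((b j h : ℝ) - y j h)) + (∑ h ∈ S, if f1 h = j then δ / 2 else 0)
        + (∑ h ∈ S, if f2 h = j then δ / 2 else 0) := by
    intro S j
    have hc : ∀ h ∈ S, (b j h : ℝ) - Y' j h =
        ((b j h : ℝ) - y j h) + ((if f1 h = j then δ / 2 else 0)
          + (if f2 h = j then δ / 2 else 0)) := by
      intro h _
      simp only [hY']
      ring
    rw [Finset.sum_congr rfl hc, Finset.sum_add_distrib, Finset.sum_add_distrib]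
    ring
  have hδ2 : (0:ℝ) ≤ δ / 2 := by linarith
  have hG1f2zero : ∀ (j : J) (h0 : M), h0 ∈ G2 → f2 h0 = j →
      (∑ h ∈ G1, if f2 h = j then δ / 2 else 0) = 0 := by
    intro j h0 hh0 he
    refine sum_ite_zero G1 (fun h hh hfe => ?_) (δ / 2)
    have : h = h0 := hinj2 (hfe.trans he.symm)
    exact Finset.disjoint_left.mp hdisj hh (this ▸ hh0)
  have hG2f1zero : ∀ (j : J) (h0 : M), h0 ∈ G1 → f1 h0 = j →
      (∑ h ∈ G2, if f1 h = j then δ / 2 else 0) = 0 := by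
    intro j h0 hh0 he
    refine sum_ite_zero G2 (fun h hh hfe => ?_) (δ / 2)
    have : h = h0 := hinj1 (hfe.trans he.symm)
    exact Finset.disjoint_left.mp hdisj (this ▸ hh0) hh
  -- new solution is feasible for the LP
  have hnew : FeasibleLP G1 G2 b a1 a2 rstar wstar Y' X1' X2' (r - δ) (w - δ) := by
    refine ⟨⟨?_, ?_, ?_, ?_, ?_, ?_, ?_, ?_, ?_, ?_, ?_⟩, ?_, ?_⟩
    · intro h hh
      obtain ⟨hl, hu⟩ := hS1 h hh
      rw [hmsum h]
      exact ⟨by linarith, by linarith⟩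
    · intro h hh
      obtain ⟨hl, hu⟩ := hS2 h hh
      rw [hmsum h]
      exact ⟨by linarith, by linarith⟩
    · intro j
      rw [hjobsub j]
      by_cases ht : (∑ h, y j h) = w
      · obtain ⟨h1x, hf1x⟩ := hcov1 j ht
        obtain ⟨h2x, hf2x⟩ := hcov2 j ht
        rw [sum_ite_inj_eq hinj1 (mem_univ h1x) hf1x,
          sum_ite_inj_eq hinj2 (mem_univ h2x) hf2x]
        rw [ht]; linarith
      · have h1 := sum_ite_nonneg f1 (univ : Finset M) j hδ2
        have h2 := sum_ite_nonneg f2 (univ : Finset M) j hδ2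
        have := hδW j ht
        linarith
    · intro j h
      constructor
      · simp only [hY']
        by_cases h1x : f1 h = j
        · by_cases h2x : f2 h = j
          · have hb := hδY1 h; rw [h1x] at hb
            simp only [if_pos h1x, if_pos h2x]; linarith
          · have hb := hδY1 h; rw [h1x] at hb
            simp only [if_pos h1x, if_neg h2x]; linarith
        · by_cases h2x : f2 h = j
          · have hb := hδY2 h; rw [h2x] at hb
            simp only [if_neg h1x, if_pos h2x]; linarith
          · simp only [if_neg h1x, if_neg h2x]
            have := (hS4 j h).1; linarith
      · simp only [hY']
        have h1 : 0 ≤ (if f1 h = j then δ / 2 else 0) := by split_ifs <;> linarith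
        have h2 : 0 ≤ (if f2 h = j then δ / 2 else 0) := by split_ifs <;> linarith
        have := (hS4 j h).2
        linarith
    · simp only [hX1']
      rw [Finset.sum_sub_distrib, Finset.sum_add_distrib,
        Finset.sum_ite_eq' univ ja (fun _ => δ / 2),
        Finset.sum_ite_eq' univ g (fun _ => δ / 2)]
      simp
      rw [hSx1]
    · simp only [hX2']
      rw [Finset.sum_sub_distrib, Finset.sum_add_distrib,
        Finset.sum_ite_eq' univ ja (fun _ => δ / 2),
        Finset.sum_ite_eq' univ k (fun _ => δ / 2)]
      simp
      rw [hSx2]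
    · intro j
      simp only [hX1', hX2']
      by_cases hja : j = ja
      · subst hja
        rw [if_neg (Ne.symm hgja), if_neg (Ne.symm hkja)]
        rw [show (if j = j then δ / 2 else 0) = δ / 2 from if_pos rfl]
        have := hSx12 j
        linarith
      · by_cases hg : j = g
        · subst hg
          rw [if_neg hja, if_neg hgk]
          rw [show (if j = j then δ / 2 else 0) = δ / 2 from if_pos rfl]
          have := hδS j hja
          linarith
        · by_cases hk : j = k
          · subst hk
            rw [if_neg hja, if_neg hg]
            rw [show (if j = j then δ / 2 else 0) = δ / 2 from if_pos rfl]
            have := hδS j hja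
            linarith
          · rw [if_neg hja, if_neg hg, if_neg hk]
            have := hδS j hja
            linarith
    · intro j
      simp only [hX1']
      constructor
      · by_cases hja : j = ja
        · subst hja
          rw [if_neg (Ne.symm hgja)]
          rw [show (if j = j then δ / 2 else 0) = δ / 2 from if_pos rfl]
          linarith
        · by_cases hg : j = g
          · subst hg
            rw [if_neg hja]
            rw [show (if j = j then δ / 2 else 0) = δ / 2 from if_pos rfl]
            linarith
          · rw [if_neg hja, if_neg hg]
            have := (hSb1 j).1; linarith
      · have h1 : 0 ≤ (if j = ja then δ / 2 else 0) := by split_ifs <;> linarith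
        have h2 : 0 ≤ (if j = g then δ / 2 else 0) := by split_ifs <;> linarith
        have := (hSb1 j).2
        linarith
    · intro j
      simp only [hX2']
      constructor
      · by_cases hja : j = ja
        · subst hja
          rw [if_neg (Ne.symm hkja)]
          rw [show (if j = j then δ / 2 else 0) = δ / 2 from if_pos rfl]
          linarith
        · by_cases hk : j = k
          · subst hk
            rw [if_neg hja]
            rw [show (if j = j then δ / 2 else 0) = δ / 2 from if_pos rfl]
            linarith
          · rw [if_neg hja, if_neg hk]
            have := (hSb2 j).1; linarith
      · have h1 : 0 ≤ (if j = ja then δ / 2 else 0) := by split_ifs <;> linarith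
        have h2 : 0 ≤ (if j = k then δ / 2 else 0) := by split_ifs <;> linarith
        have := (hSb2 j).2
        linarith
    · intro j
      rw [hGsub G1 j]
      simp only [hX2']
      by_cases hja : j = ja
      · subst hja
        rw [sum_ite_inj_eq hinj1 hA1G hA1e (δ / 2), hG1f2zero j hA2 hA2G hA2e,
          if_neg (Ne.symm hkja)]
        rw [show (if j = j then δ / 2 else 0) = δ / 2 from if_pos rfl]
        have := hSc1 j
        linarith
      · by_cases hk : j = k
        · subst hk
          rw [sum_ite_inj_eq hinj1 hGk1G hGk1e (δ / 2), hG1f2zero j hGk2 hGk2G hGk2e,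
            if_neg hja]
          rw [show (if j = j then δ / 2 else 0) = δ / 2 from if_pos rfl]
          have := hSc1 j
          linarith
        · rw [if_neg hja, if_neg hk]
          have h1 := sum_ite_inj_le hinj1 G1 j hδ2
          have h2 := sum_ite_inj_le hinj2 G1 j hδ2
          have := hSc1 j
          linarith
    · intro j
      rw [hGsub G2 j]
      simp only [hX1']
      by_cases hja : j = ja
      · subst hja
        rw [sum_ite_inj_eq hinj2 hA2G hA2e (δ / 2), hG2f1zero j hA1 hA1G hA1e,
          if_neg (Ne.symm hgja)]
        rw [show (if j = j then δ / 2 else 0) = δ / 2 from if_pos rfl]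
        have := hSc2 j
        linarith
      · by_cases hg : j = g
        · subst hg
          rw [sum_ite_inj_eq hinj2 hGg2G hGg2e (δ / 2), hG2f1zero j hGg1 hGg1G hGg1e,
            if_neg hja]
          rw [show (if j = j then δ / 2 else 0) = δ / 2 from if_pos rfl]
          have := hSc2 j
          linarith
        · rw [if_neg hja, if_neg hg]
          have h1 := sum_ite_inj_le hinj1 G2 j hδ2
          have h2 := sum_ite_inj_le hinj2 G2 j hδ2
          have := hSc2 j
          linarith
    · linarith [hwr]
    · rw [hrε] at hrlb ⊢
      linarith
  have := hopt Y' X1' X2' (r - δ) (w - δ) hnew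
  linarith
end
end

section
/- Let g and k be two different jobs such that x_{g1}·x_{g2} > 0 and x_{k1}·x_{k2} > 0. If ε_r(g,k) > 0, then a column of type (∗, g, k ; ∗) does not exist in d(y,w) or a column of type (∗ ; ∗, k, g) does not exist in d(y,w). -/
open Finset

noncomputable section

private lemma sum_ind_le_aux {M J : Type*} [DecidableEq J]
    (f : M → J) (hf : Function.Injective f) (G : Finset M) (j : J) {d : ℝ} (hd : 0 ≤ d) :
    (∑ h ∈ G, if f h = j then d else 0) ≤ d := by
  classical
  by_cases hex : ∃ h₀ ∈ G, f h₀ = j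
  · obtain ⟨h₀, hh₀, hfh₀⟩ := hex
    have heq : (∑ h ∈ G, if f h = j then d else 0) = d := by
      rw [Finset.sum_eq_single h₀]
      · simp [hfh₀]
      · intro h hh hne
        have : f h ≠ j := fun hc => hne (hf (hc.trans hfh₀.symm))
        simp [this]
      · intro hh; exact absurd hh₀ hh
    exact heq.le
  · push_neg at hex
    have : (∑ h ∈ G, if f h = j then d else 0) = 0 :=
      Finset.sum_eq_zero (by intro h hh; simp [hex h hh])
    simp [this, hd]

private lemma sum_ind_eq_aux {M J : Type*} [DecidableEq J]
    (f : M → J) (hf : Function.Injective f) (G : Finset M) (j : J) (d : ℝ)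
    (h₀ : M) (hh₀ : h₀ ∈ G) (hfh₀ : f h₀ = j) :
    (∑ h ∈ G, if f h = j then d else 0) = d := by
  classical
  rw [Finset.sum_eq_single h₀]
  · simp [hfh₀]
  · intro h hh hne
    have : f h ≠ j := fun hc => hne (hf (hc.trans hfh₀.symm))
    simp [this]
  · intro hh; exact absurd hh₀ hh

private lemma sum_ind_zero_aux {M J : Type*} [DecidableEq J]
    (f : M → J) (G : Finset M) (j : J) (d : ℝ)
    (hz : ∀ h ∈ G, f h ≠ j) :
    (∑ h ∈ G, if f h = j then d else 0) = 0 :=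
  Finset.sum_eq_zero (by intro h hh; simp [hz h hh])

private lemma sum_ind_nonneg_aux {M J : Type*} [DecidableEq J]
    (f : M → J) (G : Finset M) (j : J) {d : ℝ} (hd : 0 ≤ d) :
    0 ≤ (∑ h ∈ G, if f h = j then d else 0) :=
  Finset.sum_nonneg (by intro h _; split <;> simp [hd])

private lemma epsR_le_eps {J : Type*} [DecidableEq J] (B1 B2 : Finset J) (x1 x2 : J → ℝ)
    (r ε : ℝ) (g k : J) : epsR B1 B2 x1 x2 r ε g k ≤ ε := by
  unfold epsR
  split_ifs
  · exact min_le_right _ _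
  · exact le_refl ε

private lemma epsR_le_slack {J : Type*} [DecidableEq J] (B1 B2 : Finset J) (x1 x2 : J → ℝ)
    (r ε : ℝ) (g k : J) {j : J} (hj : j ∈ (B1 ∪ B2) \ {g, k}) :
    epsR B1 B2 x1 x2 r ε g k ≤ r - (x1 j + x2 j) := by
  unfold epsR
  rw [dif_pos ⟨j, hj⟩]
  exact le_trans (min_le_left _ _) (Finset.inf'_le _ hj)

theorem no_pair_of_full_columns_two_jobs
    {J M : Type*} [Fintype J] [Fintype M] [DecidableEq J] [DecidableEq M]
    (G1 G2 : Finset M) (hG1ne : G1.Nonempty) (hG2ne : G2.Nonempty)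
    (hdisj : Disjoint G1 G2) (hcover : G1 ∪ G2 = Finset.univ)
    (b : J → M → ℕ) (a1 a2 : J → ℕ)
    (ystar : J → M → ℝ) (x1star x2star : J → ℝ) (rstar wstar : ℝ)
    (hstar : FeasibleS G1 G2 b a1 a2 ystar x1star x2star rstar wstar)
    (hstaropt : ∀ y' x1' x2' r' w', FeasibleS G1 G2 b a1 a2 y' x1' x2' r' w' →
      wstar - rstar ≤ w' - r')
    (y : J → M → ℝ) (x1 x2 : J → ℝ) (r w : ℝ)
    (hfeas : FeasibleLP G1 G2 b a1 a2 rstar wstar y x1 x2 r w)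
    (hopt : ∀ y' x1' x2' r' w',
      FeasibleLP G1 G2 b a1 a2 rstar wstar y' x1' x2' r' w' → r ≤ r')
    (ε : ℝ) (hε0 : 0 < ε) (hε1 : ε < 1) (hrε : r = (⌊rstar⌋ : ℝ) + ε)
    (B1 B2 : Finset J)
    (hB1 : ∀ j, j ∈ B1 ↔ ¬∃ z : ℤ, x1 j = (z : ℝ))
    (hB2 : ∀ j, j ∈ B2 ↔ ¬∃ z : ℤ, x2 j = (z : ℝ))
    (cols : Finset (M → J)) (mult : (M → J) → ℝ)
    (hrep : IsColRep y w cols mult)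
    (g k : J) (hgk : g ≠ k)
    (hxg : 0 < x1 g * x2 g) (hxk : 0 < x1 k * x2 k)
    (hepsr : 0 < epsR B1 B2 x1 x2 r ε g k) :
    (¬ ∃ f ∈ cols, (∃ h ∈ G1, f h = g) ∧ (∃ h ∈ G1, f h = k)) ∨
    (¬ ∃ f ∈ cols, (∃ h ∈ G2, f h = k) ∧ (∃ h ∈ G2, f h = g)) := by
  classical
  by_contra hcon
  rw [not_or, not_not, not_not] at hcon
  obtain ⟨⟨f₁, hf₁c, ⟨hg1m, hg1G, hg1⟩, ⟨hk1m, hk1G, hk1⟩⟩,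
          ⟨f₂, hf₂c, ⟨hk2m, hk2G, hk2⟩, ⟨hg2m, hg2G, hg2⟩⟩⟩ := hcon
  obtain ⟨inj₁, pos₁, cov₁⟩ := (hrep.1 f₁ hf₁c).1
  obtain ⟨inj₂, pos₂, cov₂⟩ := (hrep.1 f₂ hf₂c).1
  obtain ⟨hS, hwr, hrlb⟩ := hfeas
  obtain ⟨h1, h2, h3, h4, h5, h6, h7, h8, h9, h10, h11⟩ := hS
  have hJne : Nonempty J := ⟨g⟩
  have hMne : Nonempty M := ⟨hG1ne.choose⟩
  -- positivity of the four x values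
  have hx1g : 0 < x1 g := by
    rcases (h8 g).1.lt_or_eq with h | h
    · exact h
    · exfalso; rw [← h] at hxg; simp at hxg
  have hx2g : 0 < x2 g := by
    rcases (h9 g).1.lt_or_eq with h | h
    · exact h
    · exfalso; rw [← h] at hxg; simp at hxg
  have hx1k : 0 < x1 k := by
    rcases (h8 k).1.lt_or_eq with h | h
    · exact h
    · exfalso; rw [← h] at hxk; simp at hxk
  have hx2k : 0 < x2 k := by
    rcases (h9 k).1.lt_or_eq with h | h
    · exact h
    · exfalso; rw [← h] at hxk; simp at hxk
  set E : ℝ := epsR B1 B2 x1 x2 r ε g k with hE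
  have hEε : E ≤ ε := epsR_le_eps B1 B2 x1 x2 r ε g k
  set eX : ℝ := min (min (x1 g) (x2 g)) (min (x1 k) (x2 k)) with heX
  have heXpos : 0 < eX := lt_min (lt_min hx1g hx2g) (lt_min hx1k hx2k)
  set eY : ℝ := (Finset.univ : Finset M).inf' Finset.univ_nonempty
      (fun h => min (y (f₁ h) h) (y (f₂ h) h)) with heY
  have heYpos : 0 < eY := by
    rw [heY, Finset.lt_inf'_iff]
    intro h _
    exact lt_min (pos₁ h) (pos₂ h)
  set eJ : ℝ := (Finset.univ : Finset J).inf' Finset.univ_nonempty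
      (fun j => if (∑ h, y j h) = w then 1 else w - ∑ h, y j h) with heJ
  have heJpos : 0 < eJ := by
    rw [heJ, Finset.lt_inf'_iff]
    intro j _
    split_ifs with ht
    · norm_num
    · have := h3 j
      have : (∑ h, y j h) < w := lt_of_le_of_ne this ht
      linarith
  set δ : ℝ := min (min E eX) (min eY eJ) / 2 with hδ
  have hδpos : 0 < δ := by
    rw [hδ]
    have := lt_min (lt_min hepsr heXpos) (lt_min heYpos heJpos)
    linarith
  have hδE : 2 * δ ≤ E := by
    have h1' : min (min E eX) (min eY eJ) ≤ E :=
      le_trans (min_le_left _ _) (min_le_left _ _)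
    rw [hδ]; linarith
  have hδX : 2 * δ ≤ eX := by
    have h1' : min (min E eX) (min eY eJ) ≤ eX :=
      le_trans (min_le_left _ _) (min_le_right _ _)
    rw [hδ]; linarith
  have hδY : 2 * δ ≤ eY := by
    have h1' : min (min E eX) (min eY eJ) ≤ eY :=
      le_trans (min_le_right _ _) (min_le_left _ _)
    rw [hδ]; linarith
  have hδJ : 2 * δ ≤ eJ := by
    have h1' : min (min E eX) (min eY eJ) ≤ eJ :=
      le_trans (min_le_right _ _) (min_le_right _ _)
    rw [hδ]; linarith
  have hδε : 2 * δ ≤ ε := le_trans hδE hEε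
  -- the perturbed solution
  set y' : J → M → ℝ := fun j h =>
    y j h - (if f₁ h = j then δ else 0) - (if f₂ h = j then δ else 0) with hy'
  set x1' : J → ℝ := fun j =>
    x1 j - (if j = g then δ else 0) - (if j = k then δ else 0) with hx1'
  set x2' : J → ℝ := fun j =>
    x2 j - (if j = g then δ else 0) - (if j = k then δ else 0) with hx2'
  set r' : ℝ := r - 2 * δ with hr'
  set w' : ℝ := w - 2 * δ with hw'
  -- machine-wise sums
  have hsumM : ∀ h, (∑ j, y' j h) = (∑ j, y j h) - 2 * δ := by
    intro h
    simp only [hy']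
    rw [Finset.sum_sub_distrib, Finset.sum_sub_distrib,
      Finset.sum_ite_eq, Finset.sum_ite_eq]
    simp
    ring
  -- machine partial-sum expansions of (b - y')
  have hsumG : ∀ (G : Finset M) (j : J),
      (∑ h ∈ G, ((b j h : ℝ) - y' j h)) =
        (∑ h ∈ G, ((b j h : ℝ) - y j h)) +
        (∑ h ∈ G, if f₁ h = j then δ else 0) +
        (∑ h ∈ G, if f₂ h = j then δ else 0) := by
    intro G j
    simp only [hy']
    rw [Finset.sum_add_distrib.symm, Finset.sum_add_distrib.symm]
    · apply Finset.sum_congr rfl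
      intro h _
      ring
  have habs₂g : ∀ h ∈ G1, f₂ h ≠ g := by
    intro h hh hc
    have : h = hg2m := inj₂ (hc.trans hg2.symm)
    subst this
    exact (Finset.disjoint_left.mp hdisj hh) hg2G
  have habs₂k : ∀ h ∈ G1, f₂ h ≠ k := by
    intro h hh hc
    have : h = hk2m := inj₂ (hc.trans hk2.symm)
    subst this
    exact (Finset.disjoint_left.mp hdisj hh) hk2G
  have habs₁g : ∀ h ∈ G2, f₁ h ≠ g := by
    intro h hh hc
    have : h = hg1m := inj₁ (hc.trans hg1.symm)
    subst this
    exact (Finset.disjoint_left.mp hdisj hg1G) hh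
  have habs₁k : ∀ h ∈ G2, f₁ h ≠ k := by
    intro h hh hc
    have : h = hk1m := inj₁ (hc.trans hk1.symm)
    subst this
    exact (Finset.disjoint_left.mp hdisj hk1G) hh
  have hfeas' : FeasibleLP G1 G2 b a1 a2 rstar wstar y' x1' x2' r' w' := by
    refine ⟨⟨?_, ?_, ?_, ?_, ?_, ?_, ?_, ?_, ?_, ?_, ?_⟩, ?_, ?_⟩
    · -- constraint on machines of G1
      intro h hh
      have := h1 h hh
      rw [hsumM h, hr', hw']
      constructor <;> linarith [this.1, this.2]
    · -- constraint on machines of G2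
      intro h hh
      have := h2 h hh
      rw [hsumM h, hr', hw']
      constructor <;> linarith [this.1, this.2]
    · -- job sums ≤ w'
      intro j
      have hexp : (∑ h, y' j h) = (∑ h, y j h)
          - (∑ h, if f₁ h = j then δ else 0) - (∑ h, if f₂ h = j then δ else 0) := by
        simp only [hy']
        rw [Finset.sum_sub_distrib, Finset.sum_sub_distrib]
      by_cases ht : (∑ h, y j h) = w
      · obtain ⟨h₁, hfh₁⟩ := cov₁ j ht
        obtain ⟨h₂, hfh₂⟩ := cov₂ j ht
        rw [hexp, sum_ind_eq_aux f₁ inj₁ Finset.univ j δ h₁ (Finset.mem_univ h₁) hfh₁,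
          sum_ind_eq_aux f₂ inj₂ Finset.univ j δ h₂ (Finset.mem_univ h₂) hfh₂, ht, hw']
        linarith
      · have hslack : eJ ≤ w - ∑ h, y j h := by
          have h' : eJ ≤ (if (∑ h, y j h) = w then (1:ℝ) else w - ∑ h, y j h) := by
            rw [heJ]
            exact Finset.inf'_le _ (Finset.mem_univ j)
          rwa [if_neg ht] at h'
        have hn1 := sum_ind_nonneg_aux f₁ Finset.univ j hδpos.le
        have hn2 := sum_ind_nonneg_aux f₂ Finset.univ j hδpos.le
        rw [hexp, hw']
        linarith
    · -- bounds on y'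
      intro j h
      have hb := h4 j h
      have hY1 : eY ≤ y (f₁ h) h := by
        rw [heY]
        exact le_trans (Finset.inf'_le _ (Finset.mem_univ h)) (min_le_left _ _)
      have hY2 : eY ≤ y (f₂ h) h := by
        rw [heY]
        exact le_trans (Finset.inf'_le _ (Finset.mem_univ h)) (min_le_right _ _)
      simp only [hy']
      by_cases c₁ : f₁ h = j <;> by_cases c₂ : f₂ h = j
      · rw [c₁] at hY1
        simp only [if_pos c₁, if_pos c₂]
        constructor <;> linarith [hb.1, hb.2]
      · rw [c₁] at hY1
        simp only [if_pos c₁, if_neg c₂]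
        constructor <;> linarith [hb.1, hb.2]
      · rw [c₂] at hY2
        simp only [if_neg c₁, if_pos c₂]
        constructor <;> linarith [hb.1, hb.2]
      · simp only [if_neg c₁, if_neg c₂]
        constructor <;> linarith [hb.1, hb.2]
    · -- sum of x1'
      simp only [hx1']
      rw [Finset.sum_sub_distrib, Finset.sum_sub_distrib,
        Finset.sum_ite_eq', Finset.sum_ite_eq']
      simp [h5, hr']
      ring
    · -- sum of x2'
      simp only [hx2']
      rw [Finset.sum_sub_distrib, Finset.sum_sub_distrib,
        Finset.sum_ite_eq', Finset.sum_ite_eq']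
      simp [h6, hr']
      ring
    · -- x1' + x2' ≤ r'
      intro j
      by_cases hjg : j = g
      · subst hjg
        simp only [hx1', hx2', if_pos rfl, if_true, if_neg hgk, hr']
        linarith [h7 j]
      · by_cases hjk : j = k
        · subst hjk
          simp only [hx1', hx2', if_pos rfl, if_true, if_neg hjg, hr']
          linarith [h7 j]
        · simp only [hx1', hx2', if_neg hjg, if_neg hjk, hr']
          by_cases hjB : j ∈ B1 ∪ B2
          · have hjmem : j ∈ (B1 ∪ B2) \ {g, k} :=
              Finset.mem_sdiff.mpr ⟨hjB, by simp [hjg, hjk]⟩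
            have := epsR_le_slack B1 B2 x1 x2 r ε g k hjmem
            rw [← hE] at this
            linarith
          · rw [Finset.mem_union, not_or] at hjB
            have hz1 : ∃ z : ℤ, x1 j = (z : ℝ) := by
              by_contra hc; exact hjB.1 ((hB1 j).mpr hc)
            have hz2 : ∃ z : ℤ, x2 j = (z : ℝ) := by
              by_contra hc; exact hjB.2 ((hB2 j).mpr hc)
            obtain ⟨z1, hz1⟩ := hz1
            obtain ⟨z2, hz2⟩ := hz2
            have hle : (z1 + z2 : ℤ) ≤ ⌊rstar⌋ := by
              have hlt : ((z1 + z2 : ℤ) : ℝ) < (⌊rstar⌋ : ℝ) + 1 := by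
                push_cast
                have := h7 j
                rw [hz1, hz2] at this
                linarith [hrε, hε1]
              have : ((z1 + z2 : ℤ) : ℝ) < ((⌊rstar⌋ + 1 : ℤ) : ℝ) := by
                push_cast at hlt ⊢; linarith
              exact Int.lt_add_one_iff.mp (by exact_mod_cast this)
            have : x1 j + x2 j ≤ (⌊rstar⌋ : ℝ) := by
              rw [hz1, hz2]
              exact_mod_cast (by exact_mod_cast hle : ((z1 + z2 : ℤ) : ℝ) ≤ (⌊rstar⌋ : ℝ))
            linarith [hrε]
    · -- bounds on x1'
      intro j
      have := h8 j
      simp only [hx1']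
      have hgb : eX ≤ x1 g := le_trans (min_le_left _ _) (min_le_left _ _)
      have hkb : eX ≤ x1 k := le_trans (min_le_right _ _) (min_le_left _ _)
      by_cases hjg : j = g
      · subst hjg
        simp only [if_pos rfl, if_true, if_neg hgk]
        constructor <;> linarith [this.1, this.2]
      · by_cases hjk : j = k
        · subst hjk
          simp only [if_pos rfl, if_true, if_neg hjg]
          constructor <;> linarith [this.1, this.2]
        · simp only [if_neg hjg, if_neg hjk]
          constructor <;> linarith [this.1, this.2]
    · -- bounds on x2'
      intro j
      have := h9 j
      simp only [hx2']
      have hgb : eX ≤ x2 g := le_trans (min_le_left _ _) (min_le_right _ _)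
      have hkb : eX ≤ x2 k := le_trans (min_le_right _ _) (min_le_right _ _)
      by_cases hjg : j = g
      · subst hjg
        simp only [if_pos rfl, if_true, if_neg hgk]
        constructor <;> linarith [this.1, this.2]
      · by_cases hjk : j = k
        · subst hjk
          simp only [if_pos rfl, if_true, if_neg hjg]
          constructor <;> linarith [this.1, this.2]
        · simp only [if_neg hjg, if_neg hjk]
          constructor <;> linarith [this.1, this.2]
    · -- row constraint over G1 with x2
      intro j
      have h10j := h10 j
      rw [hsumG G1 j, hr']
      have hT1 : (∑ h ∈ G1, if f₁ h = j then δ else 0) ≤ δ :=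
        sum_ind_le_aux f₁ inj₁ G1 j hδpos.le
      have hT2 : (∑ h ∈ G1, if f₂ h = j then δ else 0) ≤ δ :=
        sum_ind_le_aux f₂ inj₂ G1 j hδpos.le
      have hT1n : 0 ≤ (∑ h ∈ G1, if f₁ h = j then δ else 0) :=
        sum_ind_nonneg_aux f₁ G1 j hδpos.le
      have hT2n : 0 ≤ (∑ h ∈ G1, if f₂ h = j then δ else 0) :=
        sum_ind_nonneg_aux f₂ G1 j hδpos.le
      by_cases hjg : j = g
      · subst hjg
        have hT2z : (∑ h ∈ G1, if f₂ h = j then δ else 0) = 0 :=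
          sum_ind_zero_aux f₂ G1 j δ habs₂g
        simp only [hx2', if_pos rfl, if_true, if_neg hgk]
        rw [hT2z]
        linarith
      · by_cases hjk : j = k
        · subst hjk
          have hT2z : (∑ h ∈ G1, if f₂ h = j then δ else 0) = 0 :=
            sum_ind_zero_aux f₂ G1 j δ habs₂k
          simp only [hx2', if_pos rfl, if_true, if_neg hjg]
          rw [hT2z]
          linarith
        · simp only [hx2', if_neg hjg, if_neg hjk]
          linarith
    · -- row constraint over G2 with x1
      intro j
      have h11j := h11 j
      rw [hsumG G2 j, hr']
      have hT1 : (∑ h ∈ G2, if f₁ h = j then δ else 0) ≤ δ :=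
        sum_ind_le_aux f₁ inj₁ G2 j hδpos.le
      have hT2 : (∑ h ∈ G2, if f₂ h = j then δ else 0) ≤ δ :=
        sum_ind_le_aux f₂ inj₂ G2 j hδpos.le
      have hT1n : 0 ≤ (∑ h ∈ G2, if f₁ h = j then δ else 0) :=
        sum_ind_nonneg_aux f₁ G2 j hδpos.le
      have hT2n : 0 ≤ (∑ h ∈ G2, if f₂ h = j then δ else 0) :=
        sum_ind_nonneg_aux f₂ G2 j hδpos.le
      by_cases hjg : j = g
      · subst hjg
        have hT1z : (∑ h ∈ G2, if f₁ h = j then δ else 0) = 0 :=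
          sum_ind_zero_aux f₁ G2 j δ habs₁g
        simp only [hx1', if_pos rfl, if_true, if_neg hgk]
        rw [hT1z]
        linarith
      · by_cases hjk : j = k
        · subst hjk
          have hT1z : (∑ h ∈ G2, if f₁ h = j then δ else 0) = 0 :=
            sum_ind_zero_aux f₁ G2 j δ habs₁k
          simp only [hx1', if_pos rfl, if_true, if_neg hjg]
          rw [hT1z]
          linarith
        · simp only [hx1', if_neg hjg, if_neg hjk]
          linarith
    · -- w' - r' unchanged
      rw [hw', hr']
      rw [← hwr]
      ring
    · -- floor lower bound
      rw [hr', hrε]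
      linarith
  have := hopt y' x1' x2' r' w' hfeas'
  rw [hr'] at this
  linarith
end
end

section
/- Let g and k be two different jobs with x_{g1} > 0 and x_{k2} > 0, let I_k be a column of type (∗, k̄ ; ∗) (its matching matches k to no machine of G1) and I_g a column of type (∗ ; ∗, ḡ) (its matching matches g to no machine of G2). If I_k and I_g are both in d(y,w) and ε_r(g,k) > 0, then I_k is of type (∗ ; ∗, k, g) (both k and g are matched to machines of G2 in M_{I_k}), I_g is of type (∗, k, g ; ∗) (both k and g are matched to machines of G1 in M_{I_g}), and k and g belong to the same connected component of the bipartite multigraph G(I_g, I_k) whose edge multiset is M_{I_g} ∪ M_{I_k}. -/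
open Finset

noncomputable section

section Helpers

variable {J M : Type*} [Fintype J] [Fintype M] [DecidableEq J] [DecidableEq M]

lemma feasibleS_swap {G1 G2 : Finset M} {b : J → M → ℕ} {a1 a2 : J → ℕ}
    {y : J → M → ℝ} {x1 x2 : J → ℝ} {r w : ℝ}
    (h : FeasibleS G1 G2 b a1 a2 y x1 x2 r w) :
    FeasibleS G2 G1 b a2 a1 y x2 x1 r w := by
  obtain ⟨A, B, C, D, E, F, G, H, I, Jc, K⟩ := h
  exact ⟨B, A, C, D, F, E, fun j => by linarith [G j], I, H, K, Jc⟩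

lemma epsR_comm {B1 B2 : Finset J} {x1 x2 : J → ℝ} {r ε : ℝ} {g k : J} :
    epsR B2 B1 x2 x1 r ε k g = epsR B1 B2 x1 x2 r ε g k := by
  unfold epsR
  have hset : (B2 ∪ B1) \ {k, g} = (B1 ∪ B2) \ {g, k} := by
    rw [Finset.union_comm, Finset.pair_comm]
  rw [hset]
  split_ifs with h
  · congr 1
    apply Finset.inf'_congr _ rfl
    intro j _
    ring
  · rfl

end Helpers

def Rel2 {J M : Type*} (fg fk : M → J) : (J ⊕ M) → (J ⊕ M) → Prop := fun v v' =>
  ∃ h : M,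
    (v = Sum.inl (fg h) ∧ v' = Sum.inr h) ∨
    (v = Sum.inr h ∧ v' = Sum.inl (fg h)) ∨
    (v = Sum.inl (fk h) ∧ v' = Sum.inr h) ∨
    (v = Sum.inr h ∧ v' = Sum.inl (fk h))

lemma rel2_symm {J M : Type*} (fg fk : M → J) : Symmetric (Rel2 fg fk) := by
  rintro v v' ⟨h, H⟩
  exact ⟨h, by tauto⟩

section Move

set_option linter.unusedSectionVars false

variable {J M : Type*} [Fintype J] [Fintype M] [DecidableEq J] [DecidableEq M]
variable {G1 G2 : Finset M} {b : J → M → ℕ} {a1 a2 : J → ℕ} {rstar wstar : ℝ}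
variable {y : J → M → ℝ} {x1 x2 : J → ℝ} {r w ε : ℝ} {B1 B2 : Finset J} {g k : J}

lemma move_lemma
    (hfeas : FeasibleLP G1 G2 b a1 a2 rstar wstar y x1 x2 r w)
    (hopt : ∀ y' x1' x2' r' w',
      FeasibleLP G1 G2 b a1 a2 rstar wstar y' x1' x2' r' w' → r ≤ r')
    (hε1 : ε < 1) (hrε : r = (⌊rstar⌋ : ℝ) + ε)
    (hB1 : ∀ j, j ∈ B1 ↔ ¬∃ z : ℤ, x1 j = (z : ℝ))
    (hB2 : ∀ j, j ∈ B2 ↔ ¬∃ z : ℤ, x2 j = (z : ℝ))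
    (hgk : g ≠ k)
    (f : M → J) (δ : ℝ)
    (hδ0 : 0 < δ) (hδε : δ ≤ ε)
    (hδR : δ ≤ epsR B1 B2 x1 x2 r ε g k)
    (hδx1 : δ ≤ x1 g) (hδx2 : δ ≤ x2 k)
    (hδy : ∀ h, δ ≤ y (f h) h)
    (hδun : ∀ j, (∀ h, f h ≠ j) → (∑ h, y j h) ≤ w - δ)
    (hc1 : ∀ (j : J), ∀ h ∈ G1, ∀ h' ∈ G1, f h = j → f h' = j → h = h')
    (hc2 : ∀ (j : J), ∀ h ∈ G2, ∀ h' ∈ G2, f h = j → f h' = j → h = h')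
    (hg2 : ∀ h ∈ G2, f h = g → δ ≤ epsA G2 b a1 y x1 r g)
    (hk1 : ∀ h ∈ G1, f h = k → δ ≤ epsC G1 b a2 y x2 r k) :
    False := by
  obtain ⟨hS, hwr, hfl⟩ := hfeas
  obtain ⟨m1, m2, jt, ybd, sx1, sx2, sxr, x1bd, x2bd, conC, conA⟩ := hS
  have hitenn : ∀ (P : Prop) [Decidable P], (0:ℝ) ≤ if P then δ else 0 := by
    intro P _; split_ifs <;> linarith
  have hsumM : ∀ h : M, (∑ j, (if f h = j then δ else 0 : ℝ)) = δ := by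
    intro h; simp
  have hgrpnn : ∀ (s : Finset M) (j : J),
      (0:ℝ) ≤ ∑ h ∈ s, (if f h = j then δ else 0 : ℝ) :=
    fun s j => Finset.sum_nonneg (fun h _ => hitenn _)
  have hgrp : ∀ (s : Finset M) (j : J),
      (∀ h ∈ s, ∀ h' ∈ s, f h = j → f h' = j → h = h') →
      (∑ h ∈ s, (if f h = j then δ else 0 : ℝ)) ≤ δ := by
    intro s j huniq
    by_cases hex : ∃ h ∈ s, f h = j
    · obtain ⟨h0, hh0, hf0⟩ := hex
      calc ∑ h ∈ s, (if f h = j then δ else 0 : ℝ)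
          ≤ ∑ h ∈ s, (if h = h0 then δ else 0 : ℝ) := by
            apply Finset.sum_le_sum
            intro h hh
            by_cases hfh : f h = j
            · rw [if_pos hfh, if_pos (huniq h hh h0 hh0 hfh hf0)]
            · rw [if_neg hfh]; exact hitenn _
        _ = δ := by rw [Finset.sum_ite_eq' s h0 (fun _ => δ), if_pos hh0]
    · push_neg at hex
      rw [Finset.sum_eq_zero (fun h hh => if_neg (hex h hh))]
      linarith
  set y' : J → M → ℝ := fun j h => y j h - (if f h = j then δ else 0) with hy'
  set x1' : J → ℝ := fun j => x1 j - (if j = g then δ else 0) with hx1'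
  set x2' : J → ℝ := fun j => x2 j - (if j = k then δ else 0) with hx2'
  have hmach : ∀ h : M, (∑ j, y' j h) = (∑ j, y j h) - δ := by
    intro h; rw [Finset.sum_sub_distrib, hsumM h]
  have hjob : ∀ j : J,
      (∑ h, y' j h) = (∑ h, y j h) - ∑ h, (if f h = j then δ else 0 : ℝ) := by
    intro j; rw [Finset.sum_sub_distrib]
  have hgrpS : ∀ (s : Finset M) (j : J),
      (∑ h ∈ s, ((b j h : ℝ) - y' j h)) =
        (∑ h ∈ s, ((b j h : ℝ) - y j h)) + ∑ h ∈ s, (if f h = j then δ else 0 : ℝ) := by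
    intro s j
    rw [← Finset.sum_add_distrib]
    apply Finset.sum_congr rfl
    intro h _
    simp only [hy']
    ring
  have hLP : FeasibleLP G1 G2 b a1 a2 rstar wstar y' x1' x2' (r - δ) (w - δ) := by
    refine ⟨⟨?_, ?_, ?_, ?_, ?_, ?_, ?_, ?_, ?_, ?_, ?_⟩, by linarith, by rw [hrε]; linarith⟩
    · intro h hh
      refine ⟨?_, ?_⟩ <;> rw [hmach h]
      · have := (m1 h hh).1; linarith
      · have := (m1 h hh).2; linarith
    · intro h hh
      refine ⟨?_, ?_⟩ <;> rw [hmach h]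
      · have := (m2 h hh).1; linarith
      · have := (m2 h hh).2; linarith
    · intro j
      rw [hjob j]
      by_cases hcovj : ∃ h0, f h0 = j
      · obtain ⟨h0, hf0⟩ := hcovj
        have h1 : δ ≤ ∑ h, (if f h = j then δ else 0 : ℝ) := by
          have := Finset.single_le_sum (f := fun h => (if f h = j then δ else 0 : ℝ))
            (fun i _ => hitenn _) (Finset.mem_univ h0)
          simp only [hf0, if_pos] at this
          exact this
        have := jt j; linarith
      · push_neg at hcovj
        have := hδun j hcovj
        have h0 := hgrpnn Finset.univ j
        linarith
    · intro j h
      constructor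
      · simp only [hy']
        by_cases hfh : f h = j
        · rw [if_pos hfh]
          have := hδy h; rw [hfh] at this; linarith
        · rw [if_neg hfh]; have := (ybd j h).1; linarith
      · simp only [hy']
        have := (ybd j h).2
        have := hitenn (f h = j)
        linarith
    · simp only [hx1']
      rw [Finset.sum_sub_distrib, Finset.sum_ite_eq' Finset.univ g (fun _ => δ),
        if_pos (Finset.mem_univ g), sx1]
    · simp only [hx2']
      rw [Finset.sum_sub_distrib, Finset.sum_ite_eq' Finset.univ k (fun _ => δ),
        if_pos (Finset.mem_univ k), sx2]
    · intro j
      simp only [hx1', hx2']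
      by_cases hjg : j = g
      · subst hjg
        rw [if_pos rfl, if_neg hgk]
        have := sxr j; linarith
      · by_cases hjk : j = k
        · subst hjk
          rw [if_neg hjg, if_pos rfl]
          have := sxr j; linarith
        · rw [if_neg hjg, if_neg hjk]
          simp only [sub_zero]
          by_cases hjB : j ∈ B1 ∪ B2
          · have hmem : j ∈ (B1 ∪ B2) \ ({g, k} : Finset J) := by
              rw [Finset.mem_sdiff]
              exact ⟨hjB, by simp [hjg, hjk]⟩
            have hne : ((B1 ∪ B2) \ ({g, k} : Finset J)).Nonempty := ⟨j, hmem⟩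
            have h2 : ((B1 ∪ B2) \ ({g, k} : Finset J)).inf' hne
                (fun j => r - (x1 j + x2 j)) ≤ r - (x1 j + x2 j) :=
              Finset.inf'_le _ hmem
            have h3 : epsR B1 B2 x1 x2 r ε g k ≤
                ((B1 ∪ B2) \ ({g, k} : Finset J)).inf' hne (fun j => r - (x1 j + x2 j)) := by
              unfold epsR
              rw [dif_pos hne]
              exact min_le_left _ _
            linarith
          · have hz1 : ∃ z : ℤ, x1 j = (z : ℝ) := by
              by_contra hn; exact hjB (Finset.mem_union_left _ ((hB1 j).mpr hn))
            have hz2 : ∃ z : ℤ, x2 j = (z : ℝ) := by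
              by_contra hn; exact hjB (Finset.mem_union_right _ ((hB2 j).mpr hn))
            obtain ⟨z1, hzz1⟩ := hz1
            obtain ⟨z2, hzz2⟩ := hz2
            have hlt : ((z1 + z2 : ℤ) : ℝ) < (⌊rstar⌋ : ℝ) + 1 := by
              push_cast
              rw [← hzz1, ← hzz2]
              have := sxr j
              rw [hrε] at this
              linarith
            have hle : ((z1 + z2 : ℤ) : ℝ) ≤ (⌊rstar⌋ : ℝ) := by
              have h4 : z1 + z2 < ⌊rstar⌋ + 1 := by exact_mod_cast hlt
              exact_mod_cast Int.lt_add_one_iff.mp h4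
            push_cast at hle
            rw [hzz1, hzz2, hrε]
            linarith
    · intro j
      simp only [hx1']
      constructor
      · by_cases hjg : j = g
        · subst hjg; rw [if_pos rfl]; linarith
        · rw [if_neg hjg]; have := (x1bd j).1; linarith
      · have := (x1bd j).2
        have := hitenn (j = g)
        linarith
    · intro j
      simp only [hx2']
      constructor
      · by_cases hjk : j = k
        · subst hjk; rw [if_pos rfl]; linarith
        · rw [if_neg hjk]; have := (x2bd j).1; linarith
      · have := (x2bd j).2
        have := hitenn (j = k)
        linarith
    · intro j
      rw [hgrpS G1 j]
      simp only [hx2']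
      by_cases hjk : j = k
      · subst hjk
        rw [if_pos rfl]
        by_cases hex : ∃ h ∈ G1, f h = j
        · obtain ⟨h0, hh0, hf0⟩ := hex
          have hδC := hk1 h0 hh0 hf0
          have hsum := hgrp G1 j (hc1 j)
          have e1 : (∑ h ∈ G1, ((b j h : ℝ) - y j h)) =
              (∑ h ∈ G1, (b j h : ℝ)) - ∑ h ∈ G1, y j h := Finset.sum_sub_distrib _ _
          unfold epsC at hδC
          linarith
        · push_neg at hex
          have hz : (∑ h ∈ G1, (if f h = j then δ else 0 : ℝ)) = 0 :=
            Finset.sum_eq_zero (fun h hh => if_neg (hex h hh))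
          have := conC j
          rw [hz]; linarith
      · rw [if_neg hjk]
        have hsum := hgrp G1 j (hc1 j)
        have := conC j
        linarith
    · intro j
      rw [hgrpS G2 j]
      simp only [hx1']
      by_cases hjg : j = g
      · subst hjg
        rw [if_pos rfl]
        by_cases hex : ∃ h ∈ G2, f h = j
        · obtain ⟨h0, hh0, hf0⟩ := hex
          have hδA := hg2 h0 hh0 hf0
          have hsum := hgrp G2 j (hc2 j)
          have e1 : (∑ h ∈ G2, ((b j h : ℝ) - y j h)) =
              (∑ h ∈ G2, (b j h : ℝ)) - ∑ h ∈ G2, y j h := Finset.sum_sub_distrib _ _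
          unfold epsA at hδA
          linarith
        · push_neg at hex
          have hz : (∑ h ∈ G2, (if f h = j then δ else 0 : ℝ)) = 0 :=
            Finset.sum_eq_zero (fun h hh => if_neg (hex h hh))
          have := conA j
          rw [hz]; linarith
      · rw [if_neg hjg]
        have hsum := hgrp G2 j (hc2 j)
        have := conA j
        linarith
  have := hopt y' x1' x2' (r - δ) (w - δ) hLP
  linarith

lemma moveWrap
    (hfeas : FeasibleLP G1 G2 b a1 a2 rstar wstar y x1 x2 r w)
    (hopt : ∀ y' x1' x2' r' w',
      FeasibleLP G1 G2 b a1 a2 rstar wstar y' x1' x2' r' w' → r ≤ r')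
    (hε0 : 0 < ε) (hε1 : ε < 1) (hrε : r = (⌊rstar⌋ : ℝ) + ε)
    (hB1 : ∀ j, j ∈ B1 ↔ ¬∃ z : ℤ, x1 j = (z : ℝ))
    (hB2 : ∀ j, j ∈ B2 ↔ ¬∃ z : ℤ, x2 j = (z : ℝ))
    (hgk : g ≠ k) (hxg : 0 < x1 g) (hxk : 0 < x2 k)
    (hepsr : 0 < epsR B1 B2 x1 x2 r ε g k)
    (hMne : (Finset.univ : Finset M).Nonempty)
    (f : M → J)
    (hedge : ∀ h, 0 < y (f h) h)
    (hcov : ∀ j, (∀ h, f h ≠ j) → (∑ h, y j h) < w)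
    (hc1 : ∀ (j : J), ∀ h ∈ G1, ∀ h' ∈ G1, f h = j → f h' = j → h = h')
    (hc2 : ∀ (j : J), ∀ h ∈ G2, ∀ h' ∈ G2, f h = j → f h' = j → h = h')
    (hg2x : (∃ h ∈ G2, f h = g) → 0 < epsA G2 b a1 y x1 r g)
    (hk1x : (∃ h ∈ G1, f h = k) → 0 < epsC G1 b a2 y x2 r k) :
    False := by
  classical
  set U : Finset J := Finset.univ.filter (fun j => ∀ h, f h ≠ j) with hUdef
  set δM : ℝ := Finset.univ.inf' hMne (fun h => y (f h) h) with hδMdef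
  set δU : ℝ := if hUne : U.Nonempty then U.inf' hUne (fun j => w - ∑ h, y j h) else 1
    with hδUdef
  set A : ℝ := if 0 < epsA G2 b a1 y x1 r g then epsA G2 b a1 y x1 r g else 1 with hAdef
  set C : ℝ := if 0 < epsC G1 b a2 y x2 r k then epsC G1 b a2 y x2 r k else 1 with hCdef
  set δ : ℝ := min ε (min (epsR B1 B2 x1 x2 r ε g k)
      (min (x1 g) (min (x2 k) (min δM (min δU (min A C)))))) with hδdef
  have hδM0 : 0 < δM := by
    rw [hδMdef, Finset.lt_inf'_iff]
    exact fun h _ => hedge h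
  have hδU0 : 0 < δU := by
    rw [hδUdef]
    by_cases hUne : U.Nonempty
    · rw [dif_pos hUne, Finset.lt_inf'_iff]
      intro j hj
      rw [hUdef, Finset.mem_filter] at hj
      have := hcov j hj.2
      linarith
    · rw [dif_neg hUne]; norm_num
  have hA0 : 0 < A := by
    rw [hAdef]; split_ifs with hh
    · exact hh
    · norm_num
  have hC0 : 0 < C := by
    rw [hCdef]; split_ifs with hh
    · exact hh
    · norm_num
  have hδ0 : 0 < δ :=
    lt_min hε0 (lt_min hepsr (lt_min hxg (lt_min hxk (lt_min hδM0 (lt_min hδU0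
      (lt_min hA0 hC0))))))
  have hδε : δ ≤ ε := min_le_left _ _
  have hδrest := min_le_right ε (min (epsR B1 B2 x1 x2 r ε g k)
      (min (x1 g) (min (x2 k) (min δM (min δU (min A C))))))
  have hδR : δ ≤ epsR B1 B2 x1 x2 r ε g k :=
    le_trans hδrest (min_le_left _ _)
  have h3 := le_trans hδrest (min_le_right _ _)
  have hδx1 : δ ≤ x1 g := le_trans h3 (min_le_left _ _)
  have h4 := le_trans h3 (min_le_right _ _)
  have hδx2 : δ ≤ x2 k := le_trans h4 (min_le_left _ _)
  have h5 := le_trans h4 (min_le_right _ _)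
  have hδδM : δ ≤ δM := le_trans h5 (min_le_left _ _)
  have h6 := le_trans h5 (min_le_right _ _)
  have hδδU : δ ≤ δU := le_trans h6 (min_le_left _ _)
  have h7 := le_trans h6 (min_le_right _ _)
  have hδA : δ ≤ A := le_trans h7 (min_le_left _ _)
  have hδC : δ ≤ C := le_trans h7 (min_le_right _ _)
  have hδy : ∀ h, δ ≤ y (f h) h := by
    intro h
    refine le_trans hδδM ?_
    rw [hδMdef]
    exact Finset.inf'_le _ (Finset.mem_univ h)
  have hδun : ∀ j, (∀ h, f h ≠ j) → (∑ h, y j h) ≤ w - δ := by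
    intro j hj
    have hjU : j ∈ U := by
      rw [hUdef, Finset.mem_filter]
      exact ⟨Finset.mem_univ j, hj⟩
    have hUne : U.Nonempty := ⟨j, hjU⟩
    have h8 : δU ≤ w - ∑ h, y j h := by
      rw [hδUdef, dif_pos hUne]
      exact Finset.inf'_le _ hjU
    linarith [le_trans hδδU h8]
  have hg2 : ∀ h ∈ G2, f h = g → δ ≤ epsA G2 b a1 y x1 r g := by
    intro h hh he
    have hpos := hg2x ⟨h, hh, he⟩
    rw [hAdef, if_pos hpos] at hδA
    exact hδA
  have hk1 : ∀ h ∈ G1, f h = k → δ ≤ epsC G1 b a2 y x2 r k := by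
    intro h hh he
    have hpos := hk1x ⟨h, hh, he⟩
    rw [hCdef, if_pos hpos] at hδC
    exact hδC
  exact move_lemma hfeas hopt hε1 hrε hB1 hB2 hgk f δ hδ0 hδε hδR hδx1 hδx2 hδy hδun
    hc1 hc2 hg2 hk1

lemma lemA
    (hfeas : FeasibleLP G1 G2 b a1 a2 rstar wstar y x1 x2 r w)
    (hopt : ∀ y' x1' x2' r' w',
      FeasibleLP G1 G2 b a1 a2 rstar wstar y' x1' x2' r' w' → r ≤ r')
    (hε0 : 0 < ε) (hε1 : ε < 1) (hrε : r = (⌊rstar⌋ : ℝ) + ε)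
    (hB1 : ∀ j, j ∈ B1 ↔ ¬∃ z : ℤ, x1 j = (z : ℝ))
    (hB2 : ∀ j, j ∈ B2 ↔ ¬∃ z : ℤ, x2 j = (z : ℝ))
    (hgk : g ≠ k) (hxg : 0 < x1 g) (hxk : 0 < x2 k)
    (hepsr : 0 < epsR B1 B2 x1 x2 r ε g k)
    (hMne : (Finset.univ : Finset M).Nonempty)
    {fk : M → J}
    (hcol : IsColumn y w fk)
    (hfkbar : ∀ h ∈ G1, fk h ≠ k) :
    (∃ h ∈ G2, fk h = g) ∧ epsA G2 b a1 y x1 r g = 0 := by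
  obtain ⟨hinj, hpos, hcovt⟩ := hcol
  have jt := hfeas.1.2.2.1
  have conA := hfeas.1.2.2.2.2.2.2.2.2.2.2
  have hcov : ∀ j, (∀ h, fk h ≠ j) → (∑ h, y j h) < w := by
    intro j hj
    rcases lt_or_eq_of_le (jt j) with h | h
    · exact h
    · obtain ⟨h0, hh0⟩ := hcovt j h
      exact absurd hh0 (hj h0)
  have hc1 : ∀ (j : J), ∀ h ∈ G1, ∀ h' ∈ G1, fk h = j → fk h' = j → h = h' :=
    fun j h _ h' _ e1 e2 => hinj (e1.trans e2.symm)
  have hc2 : ∀ (j : J), ∀ h ∈ G2, ∀ h' ∈ G2, fk h = j → fk h' = j → h = h' :=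
    fun j h _ h' _ e1 e2 => hinj (e1.trans e2.symm)
  have hkx : (∃ h ∈ G1, fk h = k) → 0 < epsC G1 b a2 y x2 r k := by
    rintro ⟨h, hh, he⟩
    exact absurd he (hfkbar h hh)
  constructor
  · by_contra hno
    exact moveWrap hfeas hopt hε0 hε1 hrε hB1 hB2 hgk hxg hxk hepsr hMne fk hpos hcov
      hc1 hc2 (fun hex => absurd hex hno) hkx
  · have hge : 0 ≤ epsA G2 b a1 y x1 r g := by
      have hcon := conA g
      have e1 : (∑ h ∈ G2, ((b g h : ℝ) - y g h)) =
          (∑ h ∈ G2, (b g h : ℝ)) - ∑ h ∈ G2, y g h := Finset.sum_sub_distrib _ _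
      unfold epsA
      linarith
    rcases eq_or_lt_of_le hge with h | h
    · exact h.symm
    · exact absurd (moveWrap hfeas hopt hε0 hε1 hrε hB1 hB2 hgk hxg hxk hepsr hMne fk hpos
        hcov hc1 hc2 (fun _ => h) hkx) id

lemma lemFive {fk fg : M → J}
    (hfeas : FeasibleLP G1 G2 b a1 a2 rstar wstar y x1 x2 r w)
    (hopt : ∀ y' x1' x2' r' w',
      FeasibleLP G1 G2 b a1 a2 rstar wstar y' x1' x2' r' w' → r ≤ r')
    (hε0 : 0 < ε) (hε1 : ε < 1) (hrε : r = (⌊rstar⌋ : ℝ) + ε)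
    (hB1 : ∀ j, j ∈ B1 ↔ ¬∃ z : ℤ, x1 j = (z : ℝ))
    (hB2 : ∀ j, j ∈ B2 ↔ ¬∃ z : ℤ, x2 j = (z : ℝ))
    (hgk : g ≠ k) (hxg : 0 < x1 g) (hxk : 0 < x2 k)
    (hepsr : 0 < epsR B1 B2 x1 x2 r ε g k)
    (hMne : (Finset.univ : Finset M).Nonempty)
    (hfkcol : IsColumn y w fk) (hfgcol : IsColumn y w fg)
    (hfkbar : ∀ h ∈ G1, fk h ≠ k) (hfgbar : ∀ h ∈ G2, fg h ≠ g) :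
    Relation.ReflTransGen (Rel2 fg fk) (Sum.inl k) (Sum.inl g) := by
  by_contra hcon
  classical
  obtain ⟨hfkinj, hfkpos, hfkcovt⟩ := hfkcol
  obtain ⟨hfginj, hfgpos, hfgcovt⟩ := hfgcol
  have jt := hfeas.1.2.2.1
  set S : M → Prop := fun h => Relation.ReflTransGen (Rel2 fg fk) (Sum.inl g) (Sum.inr h)
    with hS
  set f : M → J := fun h => if S h then fg h else fk h with hf
  have hfval : ∀ h, f h = if S h then fg h else fk h := fun h => rfl
  have hedge : ∀ h, 0 < y (f h) h := by
    intro h; rw [hfval]; split_ifs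
    · exact hfgpos h
    · exact hfkpos h
  have hcov : ∀ j, (∀ h, f h ≠ j) → (∑ h, y j h) < w := by
    intro j hj
    rcases lt_or_eq_of_le (jt j) with hlt | heq
    · exact hlt
    · exfalso
      obtain ⟨hkm, hkme⟩ := hfkcovt j heq
      obtain ⟨hgm, hgme⟩ := hfgcovt j heq
      by_cases hSj : Relation.ReflTransGen (Rel2 fg fk) (Sum.inl g) (Sum.inl j)
      · have hSg : S hgm := hSj.tail ⟨hgm, Or.inl ⟨by rw [hgme], rfl⟩⟩
        exact hj hgm (by rw [hfval, if_pos hSg]; exact hgme)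
      · have hnS : ¬ S hkm := by
          intro hs
          exact hSj (hs.tail ⟨hkm, Or.inr (Or.inr (Or.inr ⟨rfl, by rw [hkme]⟩))⟩)
        exact hj hkm (by rw [hfval, if_neg hnS]; exact hkme)
  have hfinj : ∀ h h', f h = f h' → h = h' := by
    intro h h' he
    rw [hfval, hfval] at he
    by_cases s1 : S h <;> by_cases s2 : S h'
    · rw [if_pos s1, if_pos s2] at he; exact hfginj he
    · rw [if_pos s1, if_neg s2] at he
      exfalso
      apply s2
      have p1 : Relation.ReflTransGen (Rel2 fg fk) (Sum.inl g) (Sum.inl (fg h)) :=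
        s1.tail ⟨h, Or.inr (Or.inl ⟨rfl, rfl⟩)⟩
      exact p1.tail ⟨h', Or.inr (Or.inr (Or.inl ⟨by rw [he], rfl⟩))⟩
    · rw [if_neg s1, if_pos s2] at he
      exfalso
      apply s1
      have p1 : Relation.ReflTransGen (Rel2 fg fk) (Sum.inl g) (Sum.inl (fg h')) :=
        s2.tail ⟨h', Or.inr (Or.inl ⟨rfl, rfl⟩)⟩
      exact p1.tail ⟨h, Or.inr (Or.inr (Or.inl ⟨by rw [← he], rfl⟩))⟩
    · rw [if_neg s1, if_neg s2] at he; exact hfkinj he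
  have hc1 : ∀ (j : J), ∀ h ∈ G1, ∀ h' ∈ G1, f h = j → f h' = j → h = h' :=
    fun j h _ h' _ e1 e2 => hfinj h h' (e1.trans e2.symm)
  have hc2 : ∀ (j : J), ∀ h ∈ G2, ∀ h' ∈ G2, f h = j → f h' = j → h = h' :=
    fun j h _ h' _ e1 e2 => hfinj h h' (e1.trans e2.symm)
  have hg2x : (∃ h ∈ G2, f h = g) → 0 < epsA G2 b a1 y x1 r g := by
    rintro ⟨h, hh, he⟩
    exfalso
    rw [hfval] at he
    split_ifs at he with s
    · exact hfgbar h hh he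
    · exact s (Relation.ReflTransGen.single
        ⟨h, Or.inr (Or.inr (Or.inl ⟨by rw [he], rfl⟩))⟩)
  have hk1x : (∃ h ∈ G1, f h = k) → 0 < epsC G1 b a2 y x2 r k := by
    rintro ⟨h, hh, he⟩
    exfalso
    rw [hfval] at he
    split_ifs at he with s
    · have p : Relation.ReflTransGen (Rel2 fg fk) (Sum.inl g) (Sum.inl k) :=
        s.tail ⟨h, Or.inr (Or.inl ⟨rfl, by rw [he]⟩)⟩
      haveI : Std.Symm (Rel2 fg fk) := ⟨fun a b hab => rel2_symm fg fk hab⟩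
      exact hcon (Std.Symm.symm _ _ p)
    · exact hfkbar h hh he
  exact moveWrap hfeas hopt hε0 hε1 hrε hB1 hB2 hgk hxg hxk hepsr hMne f hedge hcov
    hc1 hc2 hg2x hk1x

lemma lemOne {fk fg : M → J}
    (hdisj : Disjoint G1 G2) (hcover : G1 ∪ G2 = Finset.univ)
    (hfeas : FeasibleLP G1 G2 b a1 a2 rstar wstar y x1 x2 r w)
    (hopt : ∀ y' x1' x2' r' w',
      FeasibleLP G1 G2 b a1 a2 rstar wstar y' x1' x2' r' w' → r ≤ r')
    (hε0 : 0 < ε) (hε1 : ε < 1) (hrε : r = (⌊rstar⌋ : ℝ) + ε)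
    (hB1 : ∀ j, j ∈ B1 ↔ ¬∃ z : ℤ, x1 j = (z : ℝ))
    (hB2 : ∀ j, j ∈ B2 ↔ ¬∃ z : ℤ, x2 j = (z : ℝ))
    (hgk : g ≠ k) (hxg : 0 < x1 g) (hxk : 0 < x2 k)
    (hepsr : 0 < epsR B1 B2 x1 x2 r ε g k)
    (hMne : (Finset.univ : Finset M).Nonempty)
    (hfkcol : IsColumn y w fk) (hfgcol : IsColumn y w fg)
    (hfkbar : ∀ h ∈ G1, fk h ≠ k) (hfgbar : ∀ h ∈ G2, fg h ≠ g)
    (hg2m : ∃ h ∈ G2, fk h = g) (hg1m : ∃ h ∈ G1, fg h = k)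
    (h5 : Relation.ReflTransGen (Rel2 fg fk) (Sum.inl k) (Sum.inl g)) :
    ∃ h ∈ G2, fk h = k := by
  by_contra hno
  classical
  obtain ⟨hfkinj, hfkpos, hfkcovt⟩ := hfkcol
  obtain ⟨hfginj, hfgpos, hfgcovt⟩ := hfgcol
  have jt := hfeas.1.2.2.1
  have hknone : ∀ h, fk h ≠ k := by
    intro h
    have hmem : h ∈ G1 ∪ G2 := by rw [hcover]; exact Finset.mem_univ h
    rcases Finset.mem_union.mp hmem with h1 | h2
    · exact hfkbar h h1
    · exact fun he => hno ⟨h, h2, he⟩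
  set D : (J ⊕ M) → (J ⊕ M) → Prop := fun v v' =>
    (∃ h : M, v = Sum.inl (fg h) ∧ v' = Sum.inr h) ∨
    (∃ h : M, v = Sum.inr h ∧ v' = Sum.inl (fk h)) with hD
  -- closure of directed reachability from k under the undirected relation
  have hstep : ∀ v v', Rel2 fg fk v v' →
      Relation.ReflTransGen D (Sum.inl k) v → Relation.ReflTransGen D (Sum.inl k) v' := by
    rintro v v' ⟨h, H⟩ hv
    rcases H with ⟨rfl, rfl⟩ | ⟨rfl, rfl⟩ | ⟨rfl, rfl⟩ | ⟨rfl, rfl⟩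
    · exact hv.tail (Or.inl ⟨h, rfl, rfl⟩)
    · rcases Relation.ReflTransGen.cases_tail hv with he | ⟨c, hc, hcd⟩
      · exact absurd he (by simp)
      · rcases hcd with ⟨h', e1, e2⟩ | ⟨h', e1, e2⟩
        · have hh : h = h' := Sum.inr.inj e2
          subst hh
          rw [e1] at hc
          exact hc
        · exact absurd e2 (by simp)
    · rcases Relation.ReflTransGen.cases_tail hv with he | ⟨c, hc, hcd⟩
      · exact absurd (Sum.inl.inj he) (hknone h)
      · rcases hcd with ⟨h', e1, e2⟩ | ⟨h', e1, e2⟩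
        · exact absurd e2 (by simp)
        · have hh : h' = h := hfkinj (Sum.inl.inj e2).symm
          subst hh
          rw [e1] at hc
          exact hc
    · exact hv.tail (Or.inr ⟨h, rfl, rfl⟩)
  have hgen : ∀ v, Relation.ReflTransGen (Rel2 fg fk) (Sum.inl k) v →
      Relation.ReflTransGen D (Sum.inl k) v := by
    intro v hvv
    induction hvv with
    | refl => exact Relation.ReflTransGen.refl
    | tail hab hbc ih => exact hstep _ _ hbc ih
  have hDg : Relation.ReflTransGen D (Sum.inl k) (Sum.inl g) := hgen _ h5
  -- extract the machine h0 with fk h0 = g just before g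
  obtain ⟨h0, h02, hfk0, hc0⟩ :
      ∃ h0, h0 ∈ G2 ∧ fk h0 = g ∧ Relation.ReflTransGen D (Sum.inl k) (Sum.inr h0) := by
    rcases Relation.ReflTransGen.cases_tail hDg with he | ⟨c, hc, hcd⟩
    · exact absurd (Sum.inl.inj he) hgk
    · rcases hcd with ⟨h', e1, e2⟩ | ⟨h', e1, e2⟩
      · exact absurd e2 (by simp)
      · have hfkh : fk h' = g := (Sum.inl.inj e2).symm
        obtain ⟨hg2h, hg2in, hg2e⟩ := hg2m
        have : h' = hg2h := hfkinj (hfkh.trans hg2e.symm)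
        rw [e1] at hc
        exact ⟨h', by rw [this]; exact hg2in, hfkh, hc⟩
  -- the Cut claim
  have hΦ : ∀ v, Relation.ReflTransGen D (Sum.inl k) v →
      (∀ j : J, v = Sum.inl j → (j = k ∨ ∃ hA, fk hA = j ∧
        Relation.ReflTransGen D (Sum.inl k) (Sum.inr hA) ∧
        (hA ∈ G2 → ∃ hA' hB', hA' ∈ G1 ∧ hB' ∈ G2 ∧ fg hB' = fk hA' ∧
          Relation.ReflTransGen D (Sum.inl k) (Sum.inr hA') ∧
          Relation.ReflTransGen D (Sum.inr hB') (Sum.inr hA)))) ∧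
      (∀ h : M, v = Sum.inr h → (h ∈ G2 → ∃ hA' hB', hA' ∈ G1 ∧ hB' ∈ G2 ∧
          fg hB' = fk hA' ∧
          Relation.ReflTransGen D (Sum.inl k) (Sum.inr hA') ∧
          Relation.ReflTransGen D (Sum.inr hB') (Sum.inr h))) := by
    intro v hv
    induction hv with
    | refl =>
      constructor
      · intro j hj
        exact Or.inl (Sum.inl.inj hj).symm
      · intro h hh
        exact absurd hh (by simp)
    | tail hab hbc ih =>
      rename_i bb cc
      rcases hbc with ⟨h, e1, e2⟩ | ⟨h, e1, e2⟩
      · subst e2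
        constructor
        · intro j hj
          exact absurd hj (by simp)
        · intro h' hh'
          have hhh : h = h' := Sum.inr.inj hh'
          subst hhh
          intro hG2
          rcases (ih.1 (fg h) e1) with hk' | ⟨hA, hfA, hreA, hcutA⟩
          · -- fg h = k : then h is the G1 machine of fg, contradiction with hG2
            exfalso
            obtain ⟨h1m, h1in, h1e⟩ := hg1m
            have : h = h1m := hfginj (hk'.trans h1e.symm)
            subst this
            exact Finset.disjoint_left.mp hdisj h1in hG2
          · have hmem : hA ∈ G1 ∪ G2 := by rw [hcover]; exact Finset.mem_univ hA
            rcases Finset.mem_union.mp hmem with hA1 | hA2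
            · exact ⟨hA, h, hA1, hG2, hfA.symm, hreA, Relation.ReflTransGen.refl⟩
            · obtain ⟨hA', hB', p1, p2, p3, p4, p5⟩ := hcutA hA2
              refine ⟨hA', hB', p1, p2, p3, p4, ?_⟩
              have q1 : Relation.ReflTransGen D (Sum.inr hB') (Sum.inl (fk hA)) :=
                p5.tail (Or.inr ⟨hA, rfl, rfl⟩)
              rw [hfA] at q1
              exact q1.tail (Or.inl ⟨h, rfl, rfl⟩)
      · subst e2
        constructor
        · intro j hj
          have hfkh : fk h = j := Sum.inl.inj hj
          right
          refine ⟨h, hfkh, by rw [e1] at hab; exact hab, ?_⟩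
          intro hG2
          exact (ih.2 h e1) hG2
        · intro h' hh'
          exact absurd hh' (by simp)
  obtain ⟨hA, hB, hA1, hB2in, hgb, hreA, hBto0⟩ := (hΦ _ hc0).2 h0 rfl h02
  -- the pseudo-column f
  set S' : M → Prop := fun h => Relation.ReflTransGen D (Sum.inr hB) (Sum.inr h) with hS'
  set f : M → J := fun h => if S' h then fg h else fk h with hf
  have hfval : ∀ h, f h = if S' h then fg h else fk h := fun h => rfl
  -- no directed path from hB to (inl k)
  have hnok : ∀ v, Relation.ReflTransGen D (Sum.inr hB) v → v ≠ Sum.inl k := by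
    intro v hv
    induction hv with
    | refl => simp
    | tail hab hbc ih =>
      rcases hbc with ⟨h, e1, e2⟩ | ⟨h, e1, e2⟩
      · rw [e2]; simp
      · rw [e2]
        intro hc
        exact hknone h (Sum.inl.inj hc)
  -- predecessor of a machine on the walk from hB
  have hpre : ∀ h, S' h → h ≠ hB →
      Relation.ReflTransGen D (Sum.inr hB) (Sum.inl (fg h)) := by
    intro h hSh hne
    rcases Relation.ReflTransGen.cases_tail hSh with he | ⟨c, hc, hcd⟩
    · exact absurd (Sum.inr.inj he) hne
    · rcases hcd with ⟨h', e1, e2⟩ | ⟨h', e1, e2⟩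
      · have hh : h = h' := Sum.inr.inj e2
        subst hh
        rw [e1] at hc
        exact hc
      · exact absurd e2 (by simp)
  -- predecessor of a job on the walk from hB
  have hpreJ : ∀ j : J, Relation.ReflTransGen D (Sum.inr hB) (Sum.inl j) →
      ∃ h'', fk h'' = j ∧ S' h'' := by
    intro j hv
    rcases Relation.ReflTransGen.cases_tail hv with he | ⟨c, hc, hcd⟩
    · exact absurd he (by simp)
    · rcases hcd with ⟨h', e1, e2⟩ | ⟨h', e1, e2⟩
      · exact absurd e2 (by simp)
      · have : fk h' = j := (Sum.inl.inj e2).symm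
        rw [e1] at hc
        exact ⟨h', this, hc⟩
  have hedge : ∀ h, 0 < y (f h) h := by
    intro h; rw [hfval]; split_ifs
    · exact hfgpos h
    · exact hfkpos h
  have hcov : ∀ j, (∀ h, f h ≠ j) → (∑ h, y j h) < w := by
    intro j hj
    rcases lt_or_eq_of_le (jt j) with hlt | heq
    · exact hlt
    · exfalso
      obtain ⟨hkm, hkme⟩ := hfkcovt j heq
      obtain ⟨hgm, hgme⟩ := hfgcovt j heq
      by_cases hSk : S' hkm
      · have hreach : Relation.ReflTransGen D (Sum.inr hB) (Sum.inl j) := by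
          have := hSk.tail (Or.inr ⟨hkm, rfl, rfl⟩)
          rwa [hkme] at this
        have hSg : S' hgm := hreach.tail (Or.inl ⟨hgm, by rw [hgme], rfl⟩)
        exact hj hgm (by rw [hfval, if_pos hSg]; exact hgme)
      · exact hj hkm (by rw [hfval, if_neg hSk]; exact hkme)
  have hkey : ∀ (j : J) (h h' : M), S' h → ¬ S' h' → fg h = j → fk h' = j →
      (h = hB ∧ h' = hA) := by
    intro j h h' s1 s2 e1 e2
    by_cases hhB : h = hB
    · subst hhB
      have : fk h' = fk hA := by rw [e2, ← e1, hgb]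
      exact ⟨rfl, hfkinj this⟩
    · exfalso
      have hp := hpre h s1 hhB
      rw [e1] at hp
      obtain ⟨h'', e3, s3⟩ := hpreJ j hp
      exact s2 (by rwa [hfkinj (e3.trans e2.symm)] at s3)
  have hc1 : ∀ (j : J), ∀ h ∈ G1, ∀ h' ∈ G1, f h = j → f h' = j → h = h' := by
    intro j h hh h' hh' e1 e2
    rw [hfval] at e1
    rw [hfval] at e2
    by_cases s1 : S' h <;> by_cases s2 : S' h'
    · rw [if_pos s1] at e1; rw [if_pos s2] at e2; exact hfginj (e1.trans e2.symm)
    · rw [if_pos s1] at e1; rw [if_neg s2] at e2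
      obtain ⟨q1, _⟩ := hkey j h h' s1 s2 e1 e2
      exfalso
      have : h ∈ G2 := by rw [q1]; exact hB2in
      exact Finset.disjoint_left.mp hdisj hh this
    · rw [if_neg s1] at e1; rw [if_pos s2] at e2
      obtain ⟨q1, _⟩ := hkey j h' h s2 s1 e2 e1
      exfalso
      have : h' ∈ G2 := by rw [q1]; exact hB2in
      exact Finset.disjoint_left.mp hdisj hh' this
    · rw [if_neg s1] at e1; rw [if_neg s2] at e2; exact hfkinj (e1.trans e2.symm)
  have hc2 : ∀ (j : J), ∀ h ∈ G2, ∀ h' ∈ G2, f h = j → f h' = j → h = h' := by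
    intro j h hh h' hh' e1 e2
    rw [hfval] at e1
    rw [hfval] at e2
    by_cases s1 : S' h <;> by_cases s2 : S' h'
    · rw [if_pos s1] at e1; rw [if_pos s2] at e2; exact hfginj (e1.trans e2.symm)
    · rw [if_pos s1] at e1; rw [if_neg s2] at e2
      obtain ⟨_, q2⟩ := hkey j h h' s1 s2 e1 e2
      exfalso
      have : h' ∈ G1 := by rw [q2]; exact hA1
      exact Finset.disjoint_left.mp hdisj this hh'
    · rw [if_neg s1] at e1; rw [if_pos s2] at e2
      obtain ⟨_, q2⟩ := hkey j h' h s2 s1 e2 e1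
      exfalso
      have : h ∈ G1 := by rw [q2]; exact hA1
      exact Finset.disjoint_left.mp hdisj this hh
    · rw [if_neg s1] at e1; rw [if_neg s2] at e2; exact hfkinj (e1.trans e2.symm)
  have hg2x : (∃ h ∈ G2, f h = g) → 0 < epsA G2 b a1 y x1 r g := by
    rintro ⟨h, hh, he⟩
    exfalso
    rw [hfval] at he
    split_ifs at he with s
    · exact hfgbar h hh he
    · have : h = h0 := hfkinj (he.trans hfk0.symm)
      exact s (by rw [this]; exact hBto0)
  have hk1x : (∃ h ∈ G1, f h = k) → 0 < epsC G1 b a2 y x2 r k := by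
    rintro ⟨h, hh, he⟩
    exfalso
    rw [hfval] at he
    split_ifs at he with s
    · by_cases hhB : h = hB
      · subst hhB
        rw [hgb] at he
        exact hknone hA he
      · have hp := hpre h s hhB
        rw [he] at hp
        exact hnok _ hp rfl
    · exact hknone h he
  exact moveWrap hfeas hopt hε0 hε1 hrε hB1 hB2 hgk hxg hxk hepsr hMne f hedge hcov
    hc1 hc2 hg2x hk1x

end Move

theorem two_columns_structure
    {J M : Type*} [Fintype J] [Fintype M] [DecidableEq J] [DecidableEq M]
    (G1 G2 : Finset M) (hG1ne : G1.Nonempty) (hG2ne : G2.Nonempty)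
    (hdisj : Disjoint G1 G2) (hcover : G1 ∪ G2 = Finset.univ)
    (b : J → M → ℕ) (a1 a2 : J → ℕ)
    (ystar : J → M → ℝ) (x1star x2star : J → ℝ) (rstar wstar : ℝ)
    (hstar : FeasibleS G1 G2 b a1 a2 ystar x1star x2star rstar wstar)
    (hstaropt : ∀ y' x1' x2' r' w', FeasibleS G1 G2 b a1 a2 y' x1' x2' r' w' →
      wstar - rstar ≤ w' - r')
    (y : J → M → ℝ) (x1 x2 : J → ℝ) (r w : ℝ)
    (hfeas : FeasibleLP G1 G2 b a1 a2 rstar wstar y x1 x2 r w)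
    (hopt : ∀ y' x1' x2' r' w',
      FeasibleLP G1 G2 b a1 a2 rstar wstar y' x1' x2' r' w' → r ≤ r')
    (ε : ℝ) (hε0 : 0 < ε) (hε1 : ε < 1) (hrε : r = (⌊rstar⌋ : ℝ) + ε)
    (B1 B2 : Finset J)
    (hB1 : ∀ j, j ∈ B1 ↔ ¬∃ z : ℤ, x1 j = (z : ℝ))
    (hB2 : ∀ j, j ∈ B2 ↔ ¬∃ z : ℤ, x2 j = (z : ℝ))
    (cols : Finset (M → J)) (mult : (M → J) → ℝ)
    (hrep : IsColRep y w cols mult)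
    (g k : J) (hgk : g ≠ k) (hxg : 0 < x1 g) (hxk : 0 < x2 k)
    (fk fg : M → J) (hfk : fk ∈ cols) (hfg : fg ∈ cols)
    (hfkbar : ∀ h ∈ G1, fk h ≠ k) (hfgbar : ∀ h ∈ G2, fg h ≠ g)
    (hepsr : 0 < epsR B1 B2 x1 x2 r ε g k) :
    ((∃ h ∈ G2, fk h = k) ∧ (∃ h ∈ G2, fk h = g)) ∧
    ((∃ h ∈ G1, fg h = k) ∧ (∃ h ∈ G1, fg h = g)) ∧
    Relation.ReflTransGen
      (fun v v' : J ⊕ M => ∃ h : M,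
        (v = Sum.inl (fg h) ∧ v' = Sum.inr h) ∨
        (v = Sum.inr h ∧ v' = Sum.inl (fg h)) ∨
        (v = Sum.inl (fk h) ∧ v' = Sum.inr h) ∨
        (v = Sum.inr h ∧ v' = Sum.inl (fk h)))
      (Sum.inl k) (Sum.inl g) := by
  have hMne : (Finset.univ : Finset M).Nonempty := ⟨hG1ne.choose, Finset.mem_univ _⟩
  have hfkcol : IsColumn y w fk := (hrep.1 fk hfk).1
  have hfgcol : IsColumn y w fg := (hrep.1 fg hfg).1
  have hfeas' : FeasibleLP G2 G1 b a2 a1 rstar wstar y x2 x1 r w :=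
    ⟨feasibleS_swap hfeas.1, hfeas.2⟩
  have hopt' : ∀ y' x1' x2' r' w',
      FeasibleLP G2 G1 b a2 a1 rstar wstar y' x1' x2' r' w' → r ≤ r' :=
    fun y' u v r' w' hf => hopt y' v u r' w' ⟨feasibleS_swap hf.1, hf.2⟩
  have hepsr' : 0 < epsR B2 B1 x2 x1 r ε k g := by rw [epsR_comm]; exact hepsr
  have hcover' : G2 ∪ G1 = Finset.univ := by rw [Finset.union_comm]; exact hcover
  have hA := lemA hfeas hopt hε0 hε1 hrε hB1 hB2 hgk hxg hxk hepsr hMne hfkcol hfkbar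
  have hA' := lemA hfeas' hopt' hε0 hε1 hrε hB2 hB1 hgk.symm hxk hxg hepsr' hMne
    hfgcol hfgbar
  have h5 := lemFive hfeas hopt hε0 hε1 hrε hB1 hB2 hgk hxg hxk hepsr hMne
    hfkcol hfgcol hfkbar hfgbar
  have h5' := lemFive hfeas' hopt' hε0 hε1 hrε hB2 hB1 hgk.symm hxk hxg hepsr' hMne
    hfgcol hfkcol hfgbar hfkbar
  have c1 := lemOne hdisj hcover hfeas hopt hε0 hε1 hrε hB1 hB2 hgk hxg hxk hepsr hMne
    hfkcol hfgcol hfkbar hfgbar hA.1 hA'.1 h5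
  have c4 := lemOne hdisj.symm hcover' hfeas' hopt' hε0 hε1 hrε hB2 hB1 hgk.symm hxk hxg
    hepsr' hMne hfgcol hfkcol hfgbar hfkbar hA'.1 hA.1 h5'
  exact ⟨⟨c1, hA.1⟩, ⟨hA'.1, c4⟩, h5⟩
end
end
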